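/- arXiv:0710.2792 — 6 statements merged into one kernel-verified Lean document; each statement's English description precedes it below -/
import Mathlib

section
/- Let T > 0, d ≥ 1, set Z = (0,T)×ℝ^d, and let G, σ : Z → (d×d real matrices) be continuous functions such that σ(z)σ(z)ᵀ is positive definite for every z ∈ Z. Then there exists a Borel measurable function β : Z → ℝ^d such that β(z) = 0 whenever det G(z) ≠ 0, and such that whenever det G(z) = 0 one has G(z)σ(z)σ(z)ᵀβ(z) = 0 and β(z)ᵀσ(z)σ(z)ᵀβ(z) = 1. -/
open MeasureTheory Set Matrix
open Filter Topology

namespace Stmt1Aux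

variable {d : ℕ}

instance instMatMS (d : ℕ) : MeasurableSpace (Matrix (Fin d) (Fin d) ℝ) :=
  inferInstanceAs (MeasurableSpace (Fin d → Fin d → ℝ))
instance instMatBS (d : ℕ) : BorelSpace (Matrix (Fin d) (Fin d) ℝ) :=
  inferInstanceAs (BorelSpace (Fin d → Fin d → ℝ))
instance instMatSC (d : ℕ) : SecondCountableTopology (Matrix (Fin d) (Fin d) ℝ) :=
  inferInstanceAs (SecondCountableTopology (Fin d → Fin d → ℝ))
instance instMatPM (d : ℕ) : TopologicalSpace.PseudoMetrizableSpace (Matrix (Fin d) (Fin d) ℝ) :=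
  inferInstanceAs (TopologicalSpace.PseudoMetrizableSpace (Fin d → Fin d → ℝ))

/-- eigenvector unitary of `Aᴴ * A`. -/
noncomputable def eU (A : Matrix (Fin d) (Fin d) ℝ) : Matrix (Fin d) (Fin d) ℝ :=
  ((isHermitian_conjTranspose_mul_self A).eigenvectorUnitary : Matrix (Fin d) (Fin d) ℝ)

noncomputable def ev (A : Matrix (Fin d) (Fin d) ℝ) : Fin d → ℝ :=
  (isHermitian_conjTranspose_mul_self A).eigenvalues

noncomputable def chiv (A : Matrix (Fin d) (Fin d) ℝ) : Fin d → ℝ :=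
  fun i => if ev A i = 0 then 1 else 0

noncomputable def kerProj (A : Matrix (Fin d) (Fin d) ℝ) : Matrix (Fin d) (Fin d) ℝ :=
  eU A * diagonal (chiv A) * star (eU A)

lemma eU_mul_star (A : Matrix (Fin d) (Fin d) ℝ) : eU A * star (eU A) = 1 :=
  mem_unitaryGroup_iff.mp ((isHermitian_conjTranspose_mul_self A).eigenvectorUnitary).2

lemma star_mul_eU (A : Matrix (Fin d) (Fin d) ℝ) : star (eU A) * eU A = 1 :=
  mem_unitaryGroup_iff'.mp ((isHermitian_conjTranspose_mul_self A).eigenvectorUnitary).2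

lemma spectral (A : Matrix (Fin d) (Fin d) ℝ) :
    Aᴴ * A = eU A * diagonal (ev A) * star (eU A) := by
  have h := (isHermitian_conjTranspose_mul_self A).spectral_theorem
  simpa [eU, ev, RCLike.ofReal_real_eq_id] using h

lemma ev_nonneg (A : Matrix (Fin d) (Fin d) ℝ) (i : Fin d) : 0 ≤ ev A i :=
  eigenvalues_conjTranspose_mul_self_nonneg A i

lemma sandwich (A : Matrix (Fin d) (Fin d) ℝ) (v w : Fin d → ℝ) :
    (eU A * diagonal v * star (eU A)) * (eU A * diagonal w * star (eU A))
      = eU A * diagonal (fun i => v i * w i) * star (eU A) := by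
  have : diagonal v * (star (eU A) * eU A) * diagonal w = diagonal (fun i => v i * w i) := by
    rw [star_mul_eU, mul_one, diagonal_mul_diagonal]
  calc (eU A * diagonal v * star (eU A)) * (eU A * diagonal w * star (eU A))
      = eU A * (diagonal v * (star (eU A) * eU A) * diagonal w) * star (eU A) := by
        simp only [Matrix.mul_assoc]
    _ = eU A * diagonal (fun i => v i * w i) * star (eU A) := by rw [this]

lemma B_mul_kerProj (A : Matrix (Fin d) (Fin d) ℝ) : (Aᴴ * A) * kerProj A = 0 := by
  rw [spectral, kerProj, sandwich]
  have : (fun i => ev A i * chiv A i) = fun _ => (0:ℝ) := by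
    funext i
    by_cases h : ev A i = 0 <;> simp [chiv, h]
  rw [this, diagonal_zero, Matrix.mul_zero, Matrix.zero_mul]

lemma mulVec_kerProj (A : Matrix (Fin d) (Fin d) ℝ) (x : Fin d → ℝ) :
    A *ᵥ (kerProj A *ᵥ x) = 0 := by
  set u := kerProj A *ᵥ x with hu
  have hBu : (Aᴴ * A) *ᵥ u = 0 := by
    rw [hu, mulVec_mulVec, B_mul_kerProj, zero_mulVec]
  have h2 : (A *ᵥ u) ⬝ᵥ (A *ᵥ u) = 0 := by
    calc (A *ᵥ u) ⬝ᵥ (A *ᵥ u) = (u ᵥ* Aᵀ) ⬝ᵥ (A *ᵥ u) := by rw [vecMul_transpose]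
      _ = u ⬝ᵥ (Aᵀ *ᵥ (A *ᵥ u)) := (dotProduct_mulVec u Aᵀ (A *ᵥ u)).symm
      _ = u ⬝ᵥ ((Aᵀ * A) *ᵥ u) := by rw [mulVec_mulVec]
      _ = 0 := by
          rw [← conjTranspose_eq_transpose_of_trivial, hBu, dotProduct_zero]
  exact dotProduct_self_eq_zero.mp h2

lemma kerProj_ne_zero {A : Matrix (Fin d) (Fin d) ℝ} (h : A.det = 0) : kerProj A ≠ 0 := by
  have hdet : (Aᴴ * A).det = 0 := by
    rw [Matrix.det_mul, h, mul_zero]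
  have hprod : ∏ i, ev A i = 0 := by
    have := (isHermitian_conjTranspose_mul_self A).det_eq_prod_eigenvalues
    rw [hdet] at this
    exact_mod_cast this.symm
  obtain ⟨i, _, hi⟩ := Finset.prod_eq_zero_iff.mp hprod
  intro hP
  have hD : diagonal (chiv A) = star (eU A) * kerProj A * eU A := by
    rw [kerProj]
    calc diagonal (chiv A)
        = 1 * diagonal (chiv A) * 1 := by rw [Matrix.one_mul, Matrix.mul_one]
      _ = (star (eU A) * eU A) * diagonal (chiv A) * (star (eU A) * eU A) := by
          rw [star_mul_eU]
      _ = star (eU A) * (eU A * diagonal (chiv A) * star (eU A)) * eU A := by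
          simp only [Matrix.mul_assoc]
  have : diagonal (chiv A) = 0 := by rw [hD, hP, Matrix.mul_zero, Matrix.zero_mul]
  have h1 : chiv A i = 0 := by
    have := congrFun (congrFun this i) i
    simpa [diagonal_apply_eq] using this
  rw [chiv, if_pos hi] at h1
  exact one_ne_zero h1

lemma measurable_entry {α : Type*} [MeasurableSpace α] {f : α → Matrix (Fin d) (Fin d) ℝ}
    (hf : Measurable f) (i j : Fin d) : Measurable fun a => f a i j :=
  (Measurable.eval (Measurable.eval hf))

lemma measurable_of_entries {α : Type*} [MeasurableSpace α] {f : α → Matrix (Fin d) (Fin d) ℝ}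
    (hf : ∀ i j, Measurable fun a => f a i j) : Measurable f :=
  measurable_pi_lambda _ fun i => measurable_pi_lambda _ fun j => hf i j

lemma measurable_matrix_inv :
    Measurable (fun A : Matrix (Fin d) (Fin d) ℝ => A⁻¹) := by
  have h : (fun A : Matrix (Fin d) (Fin d) ℝ => A⁻¹)
      = fun A => fun i j => (A.det)⁻¹ * A.adjugate i j := by
    funext A i j
    rw [Matrix.inv_def, Ring.inverse_eq_inv']
    rfl
  rw [h]
  exact measurable_of_entries fun i j =>
    (measurable_inv.comp continuous_id.matrix_det.measurable).mul
      ((continuous_id.matrix_adjugate (n := Fin d)).matrix_elem i j).measurable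

lemma measurable_kerProj : Measurable (kerProj : Matrix (Fin d) (Fin d) ℝ → _) := by
  apply measurable_of_tendsto_metrizable
    (f := fun (n : ℕ) (A : Matrix (Fin d) (Fin d) ℝ) =>
      (n:ℝ)⁻¹ • (Aᴴ * A + (n:ℝ)⁻¹ • (1 : Matrix (Fin d) (Fin d) ℝ))⁻¹)
  · intro n
    have hc : Continuous (fun A : Matrix (Fin d) (Fin d) ℝ =>
        Aᴴ * A + (n:ℝ)⁻¹ • (1 : Matrix (Fin d) (Fin d) ℝ)) :=
      ((continuous_id.matrix_conjTranspose.matrix_mul continuous_id).add continuous_const)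
    have hm : Measurable (fun A : Matrix (Fin d) (Fin d) ℝ =>
        (Aᴴ * A + (n:ℝ)⁻¹ • (1 : Matrix (Fin d) (Fin d) ℝ))⁻¹) :=
      measurable_matrix_inv.comp hc.measurable
    exact measurable_of_entries fun i j => ((measurable_entry hm i j).const_mul _)
  · rw [tendsto_pi_nhds]
    intro A
    -- the sequence of diagonal entries
    set g : ℕ → Fin d → ℝ := fun n i => (n:ℝ)⁻¹ * (ev A i + (n:ℝ)⁻¹)⁻¹ with hg
    have hgt : Tendsto g atTop (𝓝 (chiv A)) := by
      rw [tendsto_pi_nhds]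
      intro i
      by_cases h : ev A i = 0
      · have heq : ∀ᶠ n : ℕ in atTop, g n i = 1 := by
          filter_upwards [eventually_ge_atTop 1] with n hn
          have hn0 : ((n:ℝ)) ≠ 0 := by
            have : (0:ℝ) < n := by exact_mod_cast hn
            positivity
          simp [hg, h, inv_mul_cancel₀ hn0]
        have : chiv A i = 1 := by simp [chiv, h]
        rw [this]
        exact Tendsto.congr' (heq.mono fun n h => h.symm) tendsto_const_nhds
      · have hpos : 0 < ev A i := lt_of_le_of_ne (ev_nonneg A i) (Ne.symm h)
        have h1 : Tendsto (fun n : ℕ => (ev A i + (n:ℝ)⁻¹)⁻¹) atTop (𝓝 (ev A i)⁻¹) := by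
          have := (tendsto_const_nhds (x := ev A i)).add tendsto_inv_atTop_nhds_zero_nat
          rw [add_zero] at this
          exact this.inv₀ (ne_of_gt hpos)
        have := tendsto_inv_atTop_nhds_zero_nat.mul h1
        rw [zero_mul] at this
        have hchi : chiv A i = 0 := by simp [chiv, h]
        rw [hchi]
        exact this
    have hcont : Continuous (fun v : Fin d → ℝ =>
        eU A * diagonal v * star (eU A)) :=
      (continuous_const.matrix_mul (continuous_id.matrix_diagonal)).matrix_mul continuous_const
    have hlim : Tendsto (fun n => eU A * diagonal (g n) * star (eU A)) atTop (𝓝 (kerProj A)) := by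
      rw [kerProj]
      exact (hcont.tendsto (chiv A)).comp hgt
    apply hlim.congr'
    filter_upwards [eventually_ge_atTop 1] with n hn
    have hnpos : (0:ℝ) < (n:ℝ)⁻¹ := by
      have : (0:ℝ) < n := by exact_mod_cast hn
      positivity
    set ε := ((n:ℝ))⁻¹
    have hne : ∀ i, ev A i + ε ≠ 0 := fun i => ne_of_gt (by have := ev_nonneg A i; linarith)
    have step1 : Aᴴ * A + ε • (1 : Matrix (Fin d) (Fin d) ℝ)
        = eU A * diagonal (fun i => ev A i + ε) * star (eU A) := by
      have hsm : ε • (1 : Matrix (Fin d) (Fin d) ℝ)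
          = eU A * Matrix.diagonal (fun _ => ε) * star (eU A) := by
        have hde : diagonal (fun _ : Fin d => ε) = ε • (1 : Matrix (Fin d) (Fin d) ℝ) := by
          have h1 : (fun _ : Fin d => ε) = ε • (fun _ : Fin d => (1:ℝ)) := by
            funext i; simp
          rw [h1, diagonal_smul, diagonal_one]
        rw [hde, Matrix.mul_smul, Matrix.mul_one, Matrix.smul_mul, eU_mul_star]
      rw [spectral, hsm, ← Matrix.add_mul, ← Matrix.mul_add, ← diagonal_add]
    have step2 : (Aᴴ * A + ε • (1 : Matrix (Fin d) (Fin d) ℝ))⁻¹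
        = eU A * diagonal (fun i => (ev A i + ε)⁻¹) * star (eU A) := by
      apply inv_eq_right_inv
      rw [step1, sandwich]
      have : (fun i => (ev A i + ε) * (ev A i + ε)⁻¹) = fun _ => (1:ℝ) := by
        funext i
        exact mul_inv_cancel₀ (hne i)
      rw [this, diagonal_one, Matrix.mul_one, eU_mul_star]
    show eU A * diagonal (g n) * star (eU A)
        = ε • (Aᴴ * A + ε • (1 : Matrix (Fin d) (Fin d) ℝ))⁻¹
    have hgn : diagonal (g n) = ε • diagonal (fun i => (ev A i + ε)⁻¹) := by
      have h2 : g n = ε • (fun i => (ev A i + ε)⁻¹) := by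
        funext i
        simp [hg]
        rfl
      rw [h2, diagonal_smul]
    rw [step2, hgn, Matrix.mul_smul, Matrix.smul_mul]

noncomputable def kcol (A : Matrix (Fin d) (Fin d) ℝ) (i : Fin d) : Fin d → ℝ :=
  fun k => kerProj A k i

lemma kcol_eq (A : Matrix (Fin d) (Fin d) ℝ) (i : Fin d) :
    kcol A i = kerProj A *ᵥ Pi.single i 1 := by
  funext k
  rw [mulVec_single]
  simp [kcol]

lemma mulVec_kcol (A : Matrix (Fin d) (Fin d) ℝ) (i : Fin d) : A *ᵥ kcol A i = 0 := by
  rw [kcol_eq]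
  exact mulVec_kerProj A _

lemma measurable_kcol (i : Fin d) : Measurable (fun A : Matrix (Fin d) (Fin d) ℝ => kcol A i) :=
  measurable_pi_lambda _ fun k => measurable_entry measurable_kerProj k i

def Scond (d : ℕ) (i : Fin d) : Set (Matrix (Fin d) (Fin d) ℝ) :=
  {A | kcol A i ≠ 0 ∧ ∀ j, j < i → kcol A j = 0}

lemma measurableSet_kcol_zero (i : Fin d) :
    MeasurableSet {A : Matrix (Fin d) (Fin d) ℝ | kcol A i = 0} := by
  have : {A : Matrix (Fin d) (Fin d) ℝ | kcol A i = 0}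
      = ⋂ k, (fun A => kerProj A k i) ⁻¹' {0} := by
    ext A
    simp only [Set.mem_setOf_eq, Set.mem_iInter, Set.mem_preimage, Set.mem_singleton_iff]
    constructor
    · intro h k; exact congrFun h k
    · intro h; funext k; exact h k
  rw [this]
  exact MeasurableSet.iInter fun k =>
    (measurable_entry measurable_kerProj k i) (measurableSet_singleton 0)

lemma measurableSet_Scond (i : Fin d) : MeasurableSet (Scond d i) := by
  have : Scond d i = {A | kcol A i = 0}ᶜ ∩ ⋂ j : Fin d, ⋂ _ : j < i, {A | kcol A j = 0} := by
    ext A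
    constructor
    · rintro ⟨h1, h2⟩
      exact ⟨h1, Set.mem_iInter.mpr fun j => Set.mem_iInter.mpr fun hj => h2 j hj⟩
    · rintro ⟨h1, h2⟩
      exact ⟨h1, fun j hj => Set.mem_iInter.mp (Set.mem_iInter.mp h2 j) hj⟩
  rw [this]
  exact ((measurableSet_kcol_zero i).compl).inter
    (MeasurableSet.iInter fun j => MeasurableSet.iInter fun _ => measurableSet_kcol_zero j)

noncomputable def kvec (A : Matrix (Fin d) (Fin d) ℝ) : Fin d → ℝ :=
  ∑ i : Fin d, (Scond d i).indicator (fun A' => kcol A' i) A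

lemma measurable_kvec : Measurable (kvec : Matrix (Fin d) (Fin d) ℝ → _) :=
  Finset.measurable_sum _ fun i _ =>
    (measurable_kcol i).indicator (measurableSet_Scond i)

lemma mulVec_kvec (A : Matrix (Fin d) (Fin d) ℝ) : A *ᵥ kvec A = 0 := by
  have : A *ᵥ kvec A = ∑ i : Fin d, A *ᵥ ((Scond d i).indicator (fun A' => kcol A' i) A) := by
    rw [kvec]
    have h := map_sum A.mulVecLin (fun i => (Scond d i).indicator (fun A' => kcol A' i) A)
      Finset.univ
    simp only [mulVecLin_apply] at h
    exact h
  rw [this]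
  apply Finset.sum_eq_zero
  intro i _
  by_cases h : A ∈ Scond d i
  · rw [Set.indicator_of_mem h]
    exact mulVec_kcol A i
  · rw [Set.indicator_of_notMem h, mulVec_zero]

lemma kvec_ne_zero {A : Matrix (Fin d) (Fin d) ℝ} (hP : kerProj A ≠ 0) : kvec A ≠ 0 := by
  classical
  have hex : ∃ i, kcol A i ≠ 0 := by
    by_contra h
    push_neg at h
    apply hP
    funext k i
    exact congrFun (h i) k
  set s := Finset.univ.filter (fun i : Fin d => kcol A i ≠ 0) with hs
  have hsne : s.Nonempty := by
    obtain ⟨i, hi⟩ := hex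
    exact ⟨i, by simp [hs, hi]⟩
  set i₀ := s.min' hsne with hi₀
  have h₀ : kcol A i₀ ≠ 0 := (Finset.mem_filter.mp (s.min'_mem hsne)).2
  have hmin : ∀ j, j < i₀ → kcol A j = 0 := by
    intro j hj
    by_contra hne
    have hjs : j ∈ s := by simp [hs, hne]
    exact absurd (s.min'_le j hjs) (not_le.mpr hj)
  have hzero : ∀ b : Fin d, b ∈ Finset.univ → b ≠ i₀ →
      (Scond d b).indicator (fun A' => kcol A' b) A = 0 := by
    intro b _ hb
    apply Set.indicator_of_notMem
    rintro ⟨hb1, hb2⟩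
    have hbs : b ∈ s := by simp [hs, hb1]
    have h1 : i₀ ≤ b := s.min'_le b hbs
    have h2 : i₀ < b := lt_of_le_of_ne h1 (Ne.symm hb)
    exact h₀ (hb2 i₀ h2)
  have hmem : A ∈ Scond d i₀ := ⟨h₀, hmin⟩
  have hsum : kvec A = kcol A i₀ := by
    rw [kvec, Finset.sum_eq_single i₀ hzero (fun h => absurd (Finset.mem_univ i₀) h)]
    exact Set.indicator_of_mem hmem _
  rw [hsum]
  exact h₀

open Classical in
noncomputable def psi (d : ℕ) (p : Matrix (Fin d) (Fin d) ℝ × Matrix (Fin d) (Fin d) ℝ) :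
    Fin d → ℝ :=
  if p.1.det = 0 then
    (Real.sqrt ((p.2⁻¹ *ᵥ kvec p.1) ⬝ᵥ (p.2 *ᵥ (p.2⁻¹ *ᵥ kvec p.1))))⁻¹ • (p.2⁻¹ *ᵥ kvec p.1)
  else 0

section meas
variable {α : Type*} [MeasurableSpace α]

lemma measurable_mulVec' {f : α → Matrix (Fin d) (Fin d) ℝ} {g : α → Fin d → ℝ}
    (hf : Measurable f) (hg : Measurable g) : Measurable fun a => f a *ᵥ g a := by
  apply measurable_pi_lambda
  intro k
  have : (fun a => (f a *ᵥ g a) k) = fun a => ∑ j, f a k j * g a j := by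
    funext a
    rfl
  rw [this]
  exact Finset.measurable_sum _ fun j _ => (measurable_entry hf k j).mul (hg.eval)

lemma measurable_dotP {f g : α → Fin d → ℝ} (hf : Measurable f) (hg : Measurable g) :
    Measurable fun a => f a ⬝ᵥ g a := by
  have : (fun a => f a ⬝ᵥ g a) = fun a => ∑ j, f a j * g a j := by
    funext a
    rfl
  rw [this]
  exact Finset.measurable_sum _ fun j _ => (hf.eval).mul (hg.eval)

end meas

lemma measurable_psi (d : ℕ) : Measurable (psi d) := by
  classical
  have hdet : MeasurableSet {p : Matrix (Fin d) (Fin d) ℝ × Matrix (Fin d) (Fin d) ℝ |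
      p.1.det = 0} :=
    (continuous_fst.matrix_det).measurable (measurableSet_singleton 0)
  apply Measurable.ite hdet
  · have hkv : Measurable fun p : Matrix (Fin d) (Fin d) ℝ × Matrix (Fin d) (Fin d) ℝ =>
        kvec p.1 := measurable_kvec.comp measurable_fst
    have hinv : Measurable fun p : Matrix (Fin d) (Fin d) ℝ × Matrix (Fin d) (Fin d) ℝ =>
        (p.2)⁻¹ := measurable_matrix_inv.comp measurable_snd
    have hw : Measurable fun p : Matrix (Fin d) (Fin d) ℝ × Matrix (Fin d) (Fin d) ℝ =>
        p.2⁻¹ *ᵥ kvec p.1 := measurable_mulVec' hinv hkv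
    have hc : Measurable fun p : Matrix (Fin d) (Fin d) ℝ × Matrix (Fin d) (Fin d) ℝ =>
        (p.2⁻¹ *ᵥ kvec p.1) ⬝ᵥ (p.2 *ᵥ (p.2⁻¹ *ᵥ kvec p.1)) :=
      measurable_dotP hw (measurable_mulVec' measurable_snd hw)
    have hs : Measurable fun p : Matrix (Fin d) (Fin d) ℝ × Matrix (Fin d) (Fin d) ℝ =>
        (Real.sqrt ((p.2⁻¹ *ᵥ kvec p.1) ⬝ᵥ (p.2 *ᵥ (p.2⁻¹ *ᵥ kvec p.1))))⁻¹ :=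
      (Real.continuous_sqrt.measurable.comp hc).inv
    apply measurable_pi_lambda
    intro k
    exact (hs.mul (hw.eval))
  · exact measurable_const

end Stmt1Aux

open Stmt1Aux


/-- Measurable selection lemma (Lemma 7.1 of the paper).  Given continuous
matrix-valued maps `G, σ` on `Z = (0,T) × ℝ^d` such that `σ z * (σ z)ᵀ` is positive definite
on `Z`, there is a Borel measurable `β : Z → ℝ^d` vanishing where `det (G z) ≠ 0` and
satisfying `G z σ z σ zᵀ β z = 0` and `β zᵀ σ z σ zᵀ β z = 1` where `det (G z) = 0`. -/
theorem stmt_1 (d : ℕ) (hd : 1 ≤ d) (T : ℝ) (hT : 0 < T)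
    (G σ : ℝ × (Fin d → ℝ) → Matrix (Fin d) (Fin d) ℝ)
    (hGc : ContinuousOn G (Ioo 0 T ×ˢ (univ : Set (Fin d → ℝ))))
    (hσc : ContinuousOn σ (Ioo 0 T ×ˢ (univ : Set (Fin d → ℝ))))
    (hpd : ∀ z ∈ Ioo 0 T ×ˢ (univ : Set (Fin d → ℝ)), (σ z * (σ z)ᵀ).PosDef) :
    ∃ β : ℝ × (Fin d → ℝ) → (Fin d → ℝ), Measurable β ∧
      ∀ z ∈ Ioo 0 T ×ˢ (univ : Set (Fin d → ℝ)),
        ((G z).det ≠ 0 → β z = 0) ∧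
        ((G z).det = 0 →
          (G z * (σ z * (σ z)ᵀ)) *ᵥ β z = 0 ∧
          β z ⬝ᵥ ((σ z * (σ z)ᵀ) *ᵥ β z) = 1) := by

  classical
  set S := Ioo 0 T ×ˢ (univ : Set (Fin d → ℝ)) with hS
  have hSopen : IsOpen S := isOpen_Ioo.prod isOpen_univ
  have hSm : MeasurableSet S := hSopen.measurableSet
  set Ghat := S.piecewise G 1 with hGhatdef
  set Sgm := S.piecewise (fun z => σ z * (σ z)ᵀ) 1 with hSgmdef
  have hGm : Measurable Ghat :=
    ContinuousOn.measurable_piecewise hGc continuousOn_const hSm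
  have hsS : ContinuousOn (fun z => σ z * (σ z)ᵀ) S := by
    rw [continuousOn_iff_continuous_restrict] at hσc ⊢
    exact hσc.matrix_mul hσc.matrix_transpose
  have hSgm_m : Measurable Sgm :=
    ContinuousOn.measurable_piecewise hsS continuousOn_const hSm
  refine ⟨fun z => psi d (Ghat z, Sgm z),
    (measurable_psi d).comp (hGm.prodMk hSgm_m), ?_⟩
  intro z hz
  have hG : Ghat z = G z := Set.piecewise_eq_of_mem _ _ _ hz
  have hSg : Sgm z = σ z * (σ z)ᵀ := Set.piecewise_eq_of_mem _ _ _ hz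
  constructor
  · intro hdet
    simp only [psi, hG, hSg]
    rw [if_neg hdet]
  · intro hdet
    have hS2pd := hpd z hz
    have hP : kerProj (G z) ≠ 0 := kerProj_ne_zero hdet
    have hu0 : kvec (G z) ≠ 0 := kvec_ne_zero hP
    have hker : G z *ᵥ kvec (G z) = 0 := mulVec_kvec (G z)
    set S2 := σ z * (σ z)ᵀ with hS2
    set u := kvec (G z) with hu
    set w := S2⁻¹ *ᵥ u with hw
    have hS2det : IsUnit S2.det := isUnit_iff_ne_zero.mpr hS2pd.det_pos.ne'
    have hS2w : S2 *ᵥ w = u := by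
      rw [hw, mulVec_mulVec, Matrix.mul_nonsing_inv _ hS2det, one_mulVec]
    have hw0 : w ≠ 0 := by
      intro h
      rw [h, mulVec_zero] at hS2w
      exact hu0 hS2w.symm
    set c := w ⬝ᵥ (S2 *ᵥ w) with hc'
    have hc : 0 < c := by
      have := hS2pd.re_dotProduct_pos hw0
      simpa [star_trivial] using this
    have hβ : psi d (Ghat z, Sgm z) = (Real.sqrt c)⁻¹ • w := by
      simp only [psi, hG, hSg]
      rw [if_pos hdet]
    show (G z * S2) *ᵥ psi d (Ghat z, Sgm z) = 0 ∧
      psi d (Ghat z, Sgm z) ⬝ᵥ (S2 *ᵥ psi d (Ghat z, Sgm z)) = 1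
    rw [hβ]
    constructor
    · rw [mulVec_smul]
      have h0 : (G z * S2) *ᵥ w = 0 := by
        rw [← mulVec_mulVec, hS2w, hker]
      rw [h0, smul_zero]
    · rw [mulVec_smul, dotProduct_smul, smul_dotProduct]
      have hcc : (Real.sqrt c)⁻¹ * ((Real.sqrt c)⁻¹ * c) = 1 := by
        rw [← mul_assoc, ← mul_inv, Real.mul_self_sqrt hc.le, inv_mul_cancel₀ hc.ne']
      simpa [smul_eq_mul] using hcc
end

section
/- Let T > 0, r ≥ 0, and let σ : (0,T)×(0,∞)×ℝ → ℝ be such that for Lebesgue-almost every (t,s) ∈ (0,T)×(0,∞) the function y ↦ σ(t,s,y)² is non-constant on ℝ. Let v : (0,T]×(0,∞) → ℝ be continuous, possessing continuous partial derivatives ∂v/∂t, ∂v/∂s, ∂²v/∂s² on (0,T)×(0,∞), and suppose that for every (t,s) ∈ (0,T)×(0,∞) and every y ∈ ℝ: ∂v/∂t(t,s) + r s ∂v/∂s(t,s) + ½ σ(t,s,y)² s² ∂²v/∂s²(t,s) − r v(t,s) = 0. Then the terminal value is affine: there exist constants a, b ∈ ℝ with v(T,s) = a + b s for all s > 0. 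-/
open MeasureTheory Set Filter Topology

/-- MVT in multiplied form. -/
lemma mvt_mul (f f' : ℝ → ℝ) {a b : ℝ} (hab : a < b)
    (hd : ∀ x ∈ Icc a b, HasDerivAt f (f' x) x) :
    ∃ c ∈ Ioo a b, f b - f a = f' c * (b - a) := by
  have hc : ContinuousOn f (Icc a b) := fun x hx =>
    (hd x hx).continuousAt.continuousWithinAt
  obtain ⟨c, hc1, hc2⟩ := exists_hasDerivAt_eq_slope f f' hab hc
    (fun x hx => hd x (Ioo_subset_Icc_self hx))
  refine ⟨c, hc1, ?_⟩
  rw [hc2, div_mul_cancel₀ _ (sub_ne_zero.mpr hab.ne')]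

/-- If `f` has derivative `f'` on `Ioi 0`, the gain between two positive points is expressed
by a mean value point. -/
lemma mvt_pos (f f' : ℝ → ℝ) (hd : ∀ x ∈ Ioi (0:ℝ), HasDerivAt f (f' x) x)
    {a b : ℝ} (ha : 0 < a) (hab : a < b) :
    ∃ c ∈ Ioo a b, f b - f a = f' c * (b - a) :=
  mvt_mul f f' hab (fun x hx => hd x (lt_of_lt_of_le ha hx.1))

/-- PDE core of Proposition 5.1.  If `v(t,s)` is continuous on `(0,T] × (0,∞)`,
has continuous partial derivatives `∂v/∂t`, `∂v/∂s`, `∂²v/∂s²` on `(0,T) × (0,∞)`, satisfies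
the Black–Scholes-type PDE `∂v/∂t + r s ∂v/∂s + σ(t,s,y)²/2 · s² ∂²v/∂s² − r v = 0` for every
`(t,s)` in the domain and every `y ∈ ℝ`, and if for a.e. `(t,s)` the map `y ↦ σ(t,s,y)²` is
non-constant, then the terminal value `v(T,·)` is affine. -/
theorem stmt_2 (T r : ℝ) (hT : 0 < T) (hr : 0 ≤ r)
    (σ : ℝ → ℝ → ℝ → ℝ)
    (hσ : ∀ᵐ p ∂(volume.restrict ((Ioo 0 T ×ˢ Ioi 0 : Set (ℝ × ℝ)))),
      ∃ y₁ y₂ : ℝ, σ p.1 p.2 y₁ ^ 2 ≠ σ p.1 p.2 y₂ ^ 2)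
    (v vt vs vss : ℝ → ℝ → ℝ)
    (hvc : ContinuousOn (fun p : ℝ × ℝ => v p.1 p.2) (Ioc 0 T ×ˢ Ioi 0))
    (hvt : ∀ t ∈ Ioo 0 T, ∀ s ∈ Ioi (0 : ℝ), HasDerivAt (fun t' => v t' s) (vt t s) t)
    (hvs : ∀ t ∈ Ioo 0 T, ∀ s ∈ Ioi (0 : ℝ), HasDerivAt (fun s' => v t s') (vs t s) s)
    (hvss : ∀ t ∈ Ioo 0 T, ∀ s ∈ Ioi (0 : ℝ), HasDerivAt (fun s' => vs t s') (vss t s) s)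
    (hvtc : ContinuousOn (fun p : ℝ × ℝ => vt p.1 p.2) (Ioo 0 T ×ˢ Ioi 0))
    (hvsc : ContinuousOn (fun p : ℝ × ℝ => vs p.1 p.2) (Ioo 0 T ×ˢ Ioi 0))
    (hvssc : ContinuousOn (fun p : ℝ × ℝ => vss p.1 p.2) (Ioo 0 T ×ˢ Ioi 0))
    (hpde : ∀ t ∈ Ioo 0 T, ∀ s ∈ Ioi (0 : ℝ), ∀ y : ℝ,
      vt t s + r * s * vs t s + σ t s y ^ 2 / 2 * s ^ 2 * vss t s - r * v t s = 0) :
    ∃ a b : ℝ, ∀ s > (0 : ℝ), v T s = a + b * s := by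
  set U : Set (ℝ × ℝ) := Ioo 0 T ×ˢ Ioi 0 with hU
  have hUopen : IsOpen U := (isOpen_Ioo).prod isOpen_Ioi
  -- Step 1: vss ≡ 0 on U
  have hvss0 : ∀ t ∈ Ioo 0 T, ∀ s ∈ Ioi (0:ℝ), vss t s = 0 := by
    -- the set where the nonconstancy property holds forces vss = 0
    have hae : ∀ᵐ p ∂(volume : Measure (ℝ × ℝ)),
        p ∈ U → ∃ y₁ y₂ : ℝ, σ p.1 p.2 y₁ ^ 2 ≠ σ p.1 p.2 y₂ ^ 2 :=
      (ae_restrict_iff' hUopen.measurableSet).mp hσ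
    -- the "bad" set
    set E : Set (ℝ × ℝ) := U ∩ (fun p : ℝ × ℝ => vss p.1 p.2) ⁻¹' {(0:ℝ)}ᶜ with hE
    have hEopen : IsOpen E := hvssc.isOpen_inter_preimage hUopen isOpen_compl_singleton
    have hEnull : volume E = 0 := by
      rw [← le_zero_iff]
      refine le_trans (measure_mono ?_) (le_of_eq (ae_iff.mp hae))
      rintro ⟨t, s⟩ ⟨hpU, hne⟩
      simp only [mem_setOf_eq, Classical.not_imp]
      refine ⟨hpU, ?_⟩
      push_neg
      intro y₁ y₂
      obtain ⟨ht, hs⟩ := hpU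
      have h1 := hpde t ht s hs y₁
      have h2 := hpde t ht s hs y₂
      have hvne : vss t s ≠ 0 := hne
      have hs0 : (0:ℝ) < s := hs
      have h4 : σ t s y₁ ^ 2 * (s ^ 2 * vss t s) = σ t s y₂ ^ 2 * (s ^ 2 * vss t s) := by
        linear_combination 2 * h1 - 2 * h2
      have h5 : s ^ 2 * vss t s ≠ 0 :=
        mul_ne_zero (pow_ne_zero _ (ne_of_gt hs0)) hvne
      exact mul_right_cancel₀ h5 h4
    intro t ht s hs
    by_contra hne
    have hmem : (t, s) ∈ E := ⟨⟨ht, hs⟩, hne⟩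
    have : (0:ENNReal) < volume E := hEopen.measure_pos volume ⟨_, hmem⟩
    rw [hEnull] at this
    exact lt_irrefl _ this
  -- Step 2: for each t ∈ (0,T), vs(t,·) is constant on (0,∞)
  have hvsconst : ∀ t ∈ Ioo 0 T, ∀ s ∈ Ioi (0:ℝ), vs t s = vs t 1 := by
    intro t ht s hs
    have hd : ∀ x ∈ Ioi (0:ℝ), HasDerivAt (fun s' => vs t s') (vss t x) x :=
      fun x hx => hvss t ht x hx
    rcases lt_trichotomy s 1 with h | h | h
    · obtain ⟨c, hc, heq⟩ := mvt_pos _ _ hd hs h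
      have : vss t c = 0 := hvss0 t ht c (lt_trans hs hc.1)
      rw [this] at heq; linarith
    · rw [h]
    · obtain ⟨c, hc, heq⟩ := mvt_pos _ _ hd one_pos h
      have : vss t c = 0 := hvss0 t ht c (lt_trans one_pos hc.1)
      rw [this] at heq; linarith
  -- Step 3: for each t ∈ (0,T), v(t,·) is affine: v t s = v t 1 + (v t 2 - v t 1) * (s - 1)
  have haff : ∀ t ∈ Ioo 0 T, ∀ s ∈ Ioi (0:ℝ),
      v t s = v t 1 + (v t 2 - v t 1) * (s - 1) := by
    intro t ht
    have hd : ∀ x ∈ Ioi (0:ℝ), HasDerivAt (fun s' => v t s') (vs t x) x :=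
      fun x hx => hvs t ht x hx
    have hgen : ∀ s ∈ Ioi (0:ℝ), v t s - v t 1 = vs t 1 * (s - 1) := by
      intro s hs
      rcases lt_trichotomy s 1 with h | h | h
      · obtain ⟨c, hc, heq⟩ := mvt_pos _ _ hd hs h
        rw [hvsconst t ht c (lt_trans hs hc.1)] at heq
        linarith
      · rw [h]; ring
      · obtain ⟨c, hc, heq⟩ := mvt_pos _ _ hd one_pos h
        rw [hvsconst t ht c (lt_trans one_pos hc.1)] at heq
        linarith
    have h2 := hgen 2 (by norm_num)
    intro s hs
    have h1 := hgen s hs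
    have hb : vs t 1 = v t 2 - v t 1 := by linarith
    rw [hb] at h1; linarith
  -- Step 4: pass to the limit t → T⁻ using continuity on Ioc 0 T × Ioi 0
  refine ⟨2 * v T 1 - v T 2, v T 2 - v T 1, ?_⟩
  intro s hs
  have hNB : (𝓝[Ioo 0 T] T).NeBot := by
    rw [← mem_closure_iff_nhdsWithin_neBot, closure_Ioo hT.ne]
    exact ⟨hT.le, le_refl T⟩
  have hlim : ∀ z ∈ Ioi (0:ℝ),
      Tendsto (fun t => v t z) (𝓝[Ioo 0 T] T) (𝓝 (v T z)) := by
    intro z hz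
    have hmem : (T, z) ∈ Ioc 0 T ×ˢ Ioi 0 := ⟨⟨hT, le_refl T⟩, hz⟩
    have hcw : ContinuousWithinAt (fun p : ℝ × ℝ => v p.1 p.2) (Ioc 0 T ×ˢ Ioi 0) (T, z) :=
      hvc (T, z) hmem
    have h1 : Tendsto (fun t => ((t, z) : ℝ × ℝ)) (𝓝[Ioo 0 T] T)
        (𝓝[Ioc 0 T ×ˢ Ioi 0] (T, z)) := by
      rw [tendsto_nhdsWithin_iff]
      constructor
      · exact ((continuous_id.prodMk continuous_const).continuousAt).tendsto.mono_left
          nhdsWithin_le_nhds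
      · filter_upwards [self_mem_nhdsWithin] with t htm
        exact ⟨⟨htm.1, htm.2.le⟩, hz⟩
    exact hcw.tendsto.comp h1
  have hls := hlim s hs
  have hl1 := hlim 1 (mem_Ioi.mpr one_pos)
  have hl2 := hlim 2 (by norm_num)
  have htend : Tendsto (fun t => v t 1 + (v t 2 - v t 1) * (s - 1)) (𝓝[Ioo 0 T] T)
      (𝓝 (v T 1 + (v T 2 - v T 1) * (s - 1))) := by
    exact (hl1.add (((hl2.sub hl1)).mul tendsto_const_nhds))
  have heq : (fun t => v t s) =ᶠ[𝓝[Ioo 0 T] T]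
      (fun t => v t 1 + (v t 2 - v t 1) * (s - 1)) := by
    filter_upwards [self_mem_nhdsWithin] with t htm
    exact haff t htm s hs
  have := tendsto_nhds_unique (hls.congr' heq) htend
  linarith [this]
end

section
/- Let T > 0, d ≥ 1, set Z = (0,T)×ℝ^d, and let Γ : Z → (d×d real matrices) be continuous. Define the set-valued map F on Z by F(z) = {0} if det Γ(z) ≠ 0 and F(z) = {y ∈ ℝ^d : Γ(z)y = 0 and |y| = 1} if det Γ(z) = 0. Then for every closed set U ⊆ ℝ^d, the set F⁻(U) = {z ∈ Z : F(z) ∩ U ≠ ∅} is a Borel measurable subset of Z. -/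
set_option maxHeartbeats 1000000

open MeasureTheory Set Matrix Filter Topology

/-- Measurability of the preimages of the multifunction `F` from Lemma 7.1:
`F z = {0}` where `det Γ(z) ≠ 0` and `F z = Ker Γ(z) ∩ {|y| = 1}` where `det Γ(z) = 0`.
For every closed `U ⊆ ℝ^d`, the set `F⁻(U) = {z ∈ Z : F(z) ∩ U ≠ ∅}` is Borel measurable. -/
theorem stmt_3 (d : ℕ) (hd : 1 ≤ d) (T : ℝ) (hT : 0 < T)
    (Γ : ℝ × (Fin d → ℝ) → Matrix (Fin d) (Fin d) ℝ)
    (hΓ : ContinuousOn Γ (Ioo 0 T ×ˢ (univ : Set (Fin d → ℝ))))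
    (F : ℝ × (Fin d → ℝ) → Set (Fin d → ℝ))
    (hF0 : ∀ z, (Γ z).det ≠ 0 → F z = {0})
    (hF1 : ∀ z, (Γ z).det = 0 → F z = {y | Γ z *ᵥ y = 0 ∧ y ⬝ᵥ y = 1}) :
    ∀ U : Set (Fin d → ℝ), IsClosed U →
      MeasurableSet {z ∈ Ioo 0 T ×ˢ (univ : Set (Fin d → ℝ)) | (F z ∩ U).Nonempty} := by
  intro U hU
  set Z : Set (ℝ × (Fin d → ℝ)) := Ioo 0 T ×ˢ (univ : Set (Fin d → ℝ)) with hZdef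
  have hZopen : IsOpen Z := isOpen_Ioo.prod isOpen_univ
  have hdet : ContinuousOn (fun z => (Γ z).det) Z :=
    (Continuous.matrix_det continuous_id).comp_continuousOn hΓ
  -- the sphere {y | y ⬝ᵥ y = 1} is compact
  have hsphere_closed : IsClosed {y : Fin d → ℝ | y ⬝ᵥ y = 1} := by
    have hc : Continuous fun y : Fin d → ℝ => y ⬝ᵥ y := by
      unfold dotProduct
      exact continuous_finset_sum _ fun i _ => (continuous_apply i).mul (continuous_apply i)
    exact isClosed_eq hc continuous_const
  have hsphere_sub : {y : Fin d → ℝ | y ⬝ᵥ y = 1} ⊆ Metric.closedBall 0 1 := by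
    intro y hy
    simp only [Metric.mem_closedBall, dist_zero_right]
    rw [pi_norm_le_iff_of_nonneg zero_le_one]
    intro i
    have h1 : y i * y i ≤ y ⬝ᵥ y := by
      unfold dotProduct
      exact Finset.single_le_sum (fun j _ => mul_self_nonneg (y j)) (Finset.mem_univ i)
    rw [hy] at h1
    exact abs_le_one_iff_mul_self_le_one.mpr h1
  have hsphere_compact : IsCompact {y : Fin d → ℝ | y ⬝ᵥ y = 1} :=
    Metric.isCompact_of_isClosed_isBounded hsphere_closed
      (Metric.isBounded_closedBall.subset hsphere_sub)
  -- the "singular" part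
  set K : Set (ℝ × (Fin d → ℝ)) :=
    {z | z ∈ Z ∧ (Γ z).det = 0 ∧ ∃ y, y ∈ U ∧ Γ z *ᵥ y = 0 ∧ y ⬝ᵥ y = 1} with hKdef
  have hKsubZ : K ⊆ Z := fun z hz => hz.1
  have hKeq : K = Z ∩ closure K := by
    apply Subset.antisymm
    · exact subset_inter hKsubZ subset_closure
    · rintro z ⟨hzZ, hzc⟩
      obtain ⟨u, hu, hlim⟩ := mem_closure_iff_seq_limit.mp hzc
      choose y hyU hy0 hy1 using fun n => (hu n).2.2
      obtain ⟨a, ha, φ, hφ, hay⟩ := hsphere_compact.tendsto_subseq (x := y) hy1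
      have hulim : Tendsto (fun n => u (φ n)) atTop (𝓝 z) := hlim.comp hφ.tendsto_atTop
      have hulim' : Tendsto (fun n => u (φ n)) atTop (𝓝[Z] z) :=
        tendsto_nhdsWithin_of_tendsto_nhds_of_eventually_within _ hulim
          (Eventually.of_forall fun n => (hu (φ n)).1)
      have hΓlim : Tendsto (fun n => Γ (u (φ n))) atTop (𝓝 (Γ z)) :=
        ((hΓ z hzZ).tendsto).comp hulim'
      refine ⟨hzZ, ?_, a, ?_, ?_, ha⟩
      · -- det Γ z = 0
        have h1 : Tendsto (fun n => (Γ (u (φ n))).det) atTop (𝓝 (Γ z).det) :=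
          ((Continuous.matrix_det continuous_id).tendsto (Γ z)).comp hΓlim
        have h2 : (fun n => (Γ (u (φ n))).det) = fun _ => (0 : ℝ) := by
          funext n; exact (hu (φ n)).2.1
        rw [h2] at h1
        exact (tendsto_nhds_unique tendsto_const_nhds h1).symm
      · exact hU.mem_of_tendsto hay (Eventually.of_forall fun n => hyU (φ n))
      · -- Γ z *ᵥ a = 0
        have hmul : Continuous fun p : Matrix (Fin d) (Fin d) ℝ × (Fin d → ℝ) => p.1 *ᵥ p.2 :=
          continuous_fst.matrix_mulVec continuous_snd
        have h1 : Tendsto (fun n => Γ (u (φ n)) *ᵥ y (φ n)) atTop (𝓝 (Γ z *ᵥ a)) :=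
          (hmul.tendsto (Γ z, a)).comp (hΓlim.prodMk_nhds hay)
        have h2 : (fun n => Γ (u (φ n)) *ᵥ y (φ n)) = fun _ => (0 : Fin d → ℝ) := by
          funext n; exact hy0 (φ n)
        rw [h2] at h1
        exact (tendsto_nhds_unique tendsto_const_nhds h1).symm
  have hKmeas : MeasurableSet K := by
    rw [hKeq]; exact hZopen.measurableSet.inter isClosed_closure.measurableSet
  set A : Set (ℝ × (Fin d → ℝ)) := Z ∩ (fun z => (Γ z).det) ⁻¹' ({0}ᶜ) with hAdef
  have hAopen : IsOpen A := hdet.isOpen_inter_preimage hZopen isOpen_compl_singleton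
  by_cases h0 : (0 : Fin d → ℝ) ∈ U
  · have hset : {z ∈ Z | (F z ∩ U).Nonempty} = A ∪ K := by
      ext z
      simp only [mem_setOf_eq, mem_union, hAdef, mem_inter_iff, mem_preimage, mem_compl_iff,
        mem_singleton_iff, hKdef]
      constructor
      · rintro ⟨hzZ, hne⟩
        by_cases hdz : (Γ z).det = 0
        · right
          obtain ⟨y, hyF, hyU⟩ := hne
          rw [hF1 z hdz] at hyF
          exact ⟨hzZ, hdz, y, hyU, hyF.1, hyF.2⟩
        · exact Or.inl ⟨hzZ, hdz⟩
      · rintro (⟨hzZ, hdz⟩ | ⟨hzZ, hdz, y, hyU, hy0, hy1⟩)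
        · exact ⟨hzZ, ⟨0, by rw [hF0 z hdz]; exact rfl, h0⟩⟩
        · exact ⟨hzZ, ⟨y, by rw [hF1 z hdz]; exact ⟨hy0, hy1⟩, hyU⟩⟩
    rw [hset]
    exact hAopen.measurableSet.union hKmeas
  · have hset : {z ∈ Z | (F z ∩ U).Nonempty} = K := by
      ext z
      simp only [mem_setOf_eq, hKdef]
      constructor
      · rintro ⟨hzZ, hne⟩
        by_cases hdz : (Γ z).det = 0
        · obtain ⟨y, hyF, hyU⟩ := hne
          rw [hF1 z hdz] at hyF
          exact ⟨hzZ, hdz, y, hyU, hyF.1, hyF.2⟩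
        · obtain ⟨y, hyF, hyU⟩ := hne
          rw [hF0 z hdz] at hyF
          exact absurd (hyF ▸ hyU) h0
      · rintro ⟨hzZ, hdz, y, hyU, hy0, hy1⟩
        exact ⟨hzZ, ⟨y, by rw [hF1 z hdz]; exact ⟨hy0, hy1⟩, hyU⟩⟩
    rw [hset]
    exact hKmeas
end

section
/- For T > 0 and d ≥ 1, let h : ℝ^d → ℝ be Lebesgue measurable with polynomial growth, i.e. there are constants a ≥ 0 and m ∈ ℕ with |h(u)| ≤ a(1+|u|)^m for all u ∈ ℝ^d; define the Gaussian convolution v : (0,T)×ℝ^d → ℝ by v(t,x) = (2π(T−t))^{−d/2} ∫_{ℝ^d} h(u) exp(−|u−x|²/(2(T−t))) du. Then v is real analytic on (0,T)×ℝ^d, jointly in (t,x). -/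
open MeasureTheory Set Real

namespace Stmt5Aux

noncomputable def ell (d : ℕ) (u : Fin d → ℝ) : (ℝ × (Fin d → ℝ)) →L[ℝ] ℝ :=
  (-(∑ j, u j ^ 2) / 2) • (ContinuousLinearMap.fst ℝ ℝ (Fin d → ℝ)) +
    ∑ j, u j • ((ContinuousLinearMap.proj j).comp (ContinuousLinearMap.snd ℝ ℝ (Fin d → ℝ)))

lemma ell_apply {d : ℕ} (u : Fin d → ℝ) (θ : ℝ × (Fin d → ℝ)) :
    ell d u θ = (-(∑ j, u j ^ 2) / 2) * θ.1 + ∑ j, u j * θ.2 j := by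
  simp [ell, ContinuousLinearMap.sum_apply]

noncomputable def NN (d : ℕ) (u : Fin d → ℝ) : ℝ := (∑ j, u j ^ 2) / 2 + ∑ j, |u j|

lemma NN_nonneg {d : ℕ} (u : Fin d → ℝ) : 0 ≤ NN d u := by
  have h1 : (0:ℝ) ≤ ∑ j, u j ^ 2 := Finset.sum_nonneg fun j _ => sq_nonneg _
  have h2 : (0:ℝ) ≤ ∑ j, |u j| := Finset.sum_nonneg fun j _ => abs_nonneg _
  unfold NN; linarith

lemma measurable_NN {d : ℕ} : Measurable (NN d) := by unfold NN; fun_prop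

lemma norm_ell_le {d : ℕ} (u : Fin d → ℝ) : ‖ell d u‖ ≤ NN d u := by
  apply ContinuousLinearMap.opNorm_le_bound _ (NN_nonneg u)
  intro θ
  rw [ell_apply]
  have h1 : |θ.1| ≤ ‖θ‖ := by
    simpa using norm_fst_le θ
  have h2 : ∀ j, |θ.2 j| ≤ ‖θ‖ := by
    intro j
    calc |θ.2 j| ≤ ‖θ.2‖ := by simpa using norm_le_pi_norm θ.2 j
    _ ≤ ‖θ‖ := norm_snd_le θ
  have hS : (0:ℝ) ≤ ∑ j, u j ^ 2 := Finset.sum_nonneg fun j _ => sq_nonneg _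
  calc ‖(-(∑ j, u j ^ 2) / 2) * θ.1 + ∑ j, u j * θ.2 j‖
      ≤ |(-(∑ j, u j ^ 2) / 2) * θ.1| + |∑ j, u j * θ.2 j| := norm_add_le _ _
    _ ≤ ((∑ j, u j ^ 2) / 2) * ‖θ‖ + (∑ j, |u j|) * ‖θ‖ := by
        gcongr ?_ + ?_
        · rw [abs_mul]
          apply mul_le_mul _ h1 (abs_nonneg _) (by positivity)
          rw [abs_div, abs_neg, abs_of_nonneg hS]; simp
        · calc |∑ j, u j * θ.2 j| ≤ ∑ j, |u j * θ.2 j| := Finset.abs_sum_le_sum_abs _ _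
            _ ≤ ∑ j, |u j| * ‖θ‖ := by
                apply Finset.sum_le_sum
                intro j _
                rw [abs_mul]
                exact mul_le_mul_of_nonneg_left (h2 j) (abs_nonneg _)
            _ = (∑ j, |u j|) * ‖θ‖ := by rw [Finset.sum_mul]
    _ = NN d u * ‖θ‖ := by rw [NN]; ring

lemma continuous_ell (d : ℕ) : Continuous (ell d) := by
  unfold ell
  apply Continuous.add
  · exact (Continuous.div_const (continuous_finset_sum _ fun j _ =>
      (continuous_apply j).pow 2).neg 2).smul continuous_const
  · exact continuous_finset_sum _ fun j _ => (continuous_apply j).smul continuous_const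

lemma measurable_ell_app {d : ℕ} (θ : ℝ × (Fin d → ℝ)) :
    Measurable fun u : Fin d → ℝ => ell d u θ := by
  simp only [ell_apply]
  fun_prop

lemma abs_ell_app_le {d : ℕ} (u : Fin d → ℝ) (y : ℝ × (Fin d → ℝ)) :
    |ell d u y| ≤ NN d u * ‖y‖ :=
  (ell d u).le_of_opNorm_le (norm_ell_le u) y

lemma pow_le_factorial_mul_exp {x : ℝ} (hx : 0 ≤ x) (n : ℕ) :
    x ^ n ≤ (n.factorial : ℝ) * Real.exp x := by
  have h2 : x ^ n / n.factorial ≤ ∑ i ∈ Finset.range (n + 1), x ^ i / i.factorial :=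
    Finset.single_le_sum (f := fun i => x ^ i / (i.factorial:ℝ))
      (fun i _ => by positivity) (Finset.self_mem_range_succ n)
  have h := h2.trans (Real.sum_le_exp_of_nonneg hx (n + 1))
  have hn : (0:ℝ) < (n.factorial:ℝ) := by positivity
  rw [div_le_iff₀ hn] at h
  calc x ^ n ≤ Real.exp x * n.factorial := h
    _ = (n.factorial : ℝ) * Real.exp x := mul_comm _ _

lemma exp_eq_tsum (x : ℝ) : Real.exp x = ∑' n : ℕ, x ^ n / n.factorial := by
  rw [Real.exp_eq_exp_ℝ]
  exact congrFun NormedSpace.exp_eq_tsum_div x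

set_option synthInstance.maxHeartbeats 1000000 in
theorem analyticAt_laplace {d : ℕ} {h : (Fin d → ℝ) → ℝ} (hmeas : Measurable h)
    (θ₀ : ℝ × (Fin d → ℝ)) {ε : ℝ} (hε : 0 < ε)
    (hint : Integrable (fun u => |h u| * Real.exp (ell d u θ₀ + ε * NN d u))) :
    AnalyticAt ℝ (fun θ => ∫ u, h u * Real.exp (ell d u θ)) θ₀ := by
  set K : (Fin d → ℝ) → ℝ := fun u => h u * Real.exp (ell d u θ₀) with hK
  have hKmeas : Measurable K := hmeas.mul (measurable_ell_app θ₀).exp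
  have habsK : ∀ u, |K u| = |h u| * Real.exp (ell d u θ₀) := fun u => by
    rw [hK, abs_mul, abs_of_pos (Real.exp_pos _)]
  have hKexp : Integrable (fun u => |K u| * Real.exp (ε * NN d u)) := by
    have he : ∀ u, |K u| * Real.exp (ε * NN d u)
        = |h u| * Real.exp (ell d u θ₀ + ε * NN d u) := by
      intro u; rw [habsK, Real.exp_add]; ring
    simpa only [he] using hint
  have Gn_int : ∀ n : ℕ, Integrable (fun u => |K u| * NN d u ^ n) := by
    intro n
    apply Integrable.mono' (hKexp.const_mul ((n.factorial : ℝ) / ε ^ n))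
    · exact (hKmeas.abs.mul (measurable_NN.pow_const n)).aestronglyMeasurable
    · filter_upwards with u
      rw [Real.norm_eq_abs,
        abs_of_nonneg (mul_nonneg (abs_nonneg _) (pow_nonneg (NN_nonneg u) n))]
      calc |K u| * NN d u ^ n = (|K u| * (ε * NN d u) ^ n) / ε ^ n := by
            rw [mul_pow]; field_simp
        _ ≤ (|K u| * ((n.factorial:ℝ) * Real.exp (ε * NN d u))) / ε ^ n := by
            gcongr
            exact pow_le_factorial_mul_exp (mul_nonneg hε.le (NN_nonneg u)) n
        _ = (n.factorial:ℝ) / ε ^ n * (|K u| * Real.exp (ε * NN d u)) := by ring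
  set Q : (n : ℕ) → (Fin d → ℝ) → ContinuousMultilinearMap ℝ (fun _ : Fin n => ℝ × (Fin d → ℝ)) ℝ :=
    fun n u => K u • ((ContinuousMultilinearMap.mkPiAlgebra ℝ (Fin n) ℝ).compContinuousLinearMap
      fun _ => ell d u) with hQ
  have hQnorm : ∀ n u, ‖Q n u‖ ≤ |K u| * NN d u ^ n := by
    intro n u
    simp only [hQ]
    refine (norm_smul_le (K u) ((ContinuousMultilinearMap.mkPiAlgebra ℝ (Fin n) ℝ).compContinuousLinearMap
      fun _ => ell d u)).trans ?_
    rw [Real.norm_eq_abs]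
    apply mul_le_mul_of_nonneg_left _ (abs_nonneg _)
    calc ‖(ContinuousMultilinearMap.mkPiAlgebra ℝ (Fin n) ℝ).compContinuousLinearMap
          fun _ => ell d u‖
        ≤ ‖ContinuousMultilinearMap.mkPiAlgebra ℝ (Fin n) ℝ‖ * ∏ _i : Fin n, ‖ell d u‖ :=
          ContinuousMultilinearMap.norm_compContinuousLinearMap_le _ _
      _ = ‖ell d u‖ ^ n := by
          rw [ContinuousMultilinearMap.norm_mkPiAlgebra, one_mul, Finset.prod_const,
            Finset.card_univ, Fintype.card_fin]
      _ ≤ NN d u ^ n := pow_le_pow_left₀ (norm_nonneg _) (norm_ell_le u) n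
  have hQmeas : ∀ n, AEStronglyMeasurable (Q n) volume := by
    intro n
    apply AEStronglyMeasurable.smul hKmeas.aestronglyMeasurable
    apply Continuous.aestronglyMeasurable
    exact ((ContinuousMultilinearMap.compContinuousLinearMapLRight
      (ContinuousMultilinearMap.mkPiAlgebra ℝ (Fin n) ℝ)).cont).comp
      (continuous_pi fun _ => continuous_ell d)
  have Qint : ∀ n, Integrable (Q n) := fun n =>
    (Gn_int n).mono' (hQmeas n) (Filter.Eventually.of_forall fun u => hQnorm n u)
  set p : FormalMultilinearSeries ℝ (ℝ × (Fin d → ℝ)) ℝ :=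
    fun n => ((n.factorial : ℝ))⁻¹ • ∫ u, Q n u with hp
  have papply : ∀ (n : ℕ) (y : ℝ × (Fin d → ℝ)),
      (p n) (fun _ => y) = ∫ u, K u * ((ell d u y) ^ n / n.factorial) := by
    intro n y
    have h1 : (∫ u, Q n u) (fun _ => y) = ∫ u, (Q n u) (fun _ => y) :=
      ContinuousMultilinearMap.integral_apply (Qint n) _
    have h2 : ∀ u, (Q n u) (fun _ : Fin n => y) = K u * (ell d u y) ^ n := by
      intro u
      simp [hQ, ContinuousMultilinearMap.compContinuousLinearMap_apply,
        ContinuousMultilinearMap.mkPiAlgebra_apply, Finset.prod_const, smul_eq_mul]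
    rw [hp]
    simp only [ContinuousMultilinearMap.smul_apply]
    rw [h1]
    simp only [h2, smul_eq_mul]
    have he : (fun u => K u * ((ell d u y) ^ n / n.factorial))
        = fun u => (n.factorial:ℝ)⁻¹ * (K u * (ell d u y) ^ n) := by
      funext u; ring
    rw [he, integral_const_mul]
  set M : ℝ := ∫ u, |K u| * Real.exp (ε * NN d u) with hM
  have pnorm : ∀ n : ℕ, ‖p n‖ * ε ^ n ≤ M := by
    intro n
    have h1 : ‖p n‖ ≤ (n.factorial:ℝ)⁻¹ * ∫ u, |K u| * NN d u ^ n := by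
      rw [hp]
      refine (norm_smul_le ((n.factorial : ℝ))⁻¹ (∫ u, Q n u)).trans ?_
      rw [norm_inv, Real.norm_natCast]
      apply mul_le_mul_of_nonneg_left _ (by positivity)
      calc ‖∫ u, Q n u‖ ≤ ∫ u, ‖Q n u‖ := norm_integral_le_integral_norm _
        _ ≤ ∫ u, |K u| * NN d u ^ n :=
          integral_mono (Qint n).norm (Gn_int n) (fun u => hQnorm n u)
    have hε' : (0:ℝ) ≤ ε ^ n := by positivity
    calc ‖p n‖ * ε ^ n ≤ ((n.factorial:ℝ)⁻¹ * ∫ u, |K u| * NN d u ^ n) * ε ^ n :=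
          mul_le_mul_of_nonneg_right h1 hε'
      _ = ∫ u, |K u| * ((ε * NN d u) ^ n / n.factorial) := by
          have he : (fun u => |K u| * ((ε * NN d u) ^ n / n.factorial))
              = fun u => ((n.factorial:ℝ)⁻¹ * ε ^ n) * (|K u| * NN d u ^ n) := by
            funext u; rw [mul_pow]; field_simp
          rw [he, integral_const_mul]; ring
      _ ≤ ∫ u, |K u| * Real.exp (ε * NN d u) := by
          apply integral_mono _ hKexp
          · intro u
            apply mul_le_mul_of_nonneg_left _ (abs_nonneg _)
            rw [div_le_iff₀ (by positivity : (0:ℝ) < (n.factorial:ℝ))]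
            calc (ε * NN d u) ^ n ≤ (n.factorial:ℝ) * Real.exp (ε * NN d u) :=
                  pow_le_factorial_mul_exp (mul_nonneg hε.le (NN_nonneg u)) n
              _ = Real.exp (ε * NN d u) * n.factorial := mul_comm _ _
          · have : (fun u => |K u| * ((ε * NN d u) ^ n / n.factorial))
                = fun u => (ε ^ n / n.factorial) * (|K u| * NN d u ^ n) := by
              funext u; rw [mul_pow]; ring
            rw [this]
            exact (Gn_int n).const_mul _
  refine ⟨p, ENNReal.ofReal ε, ?_, ENNReal.ofReal_pos.mpr hε, ?_⟩
  · have hb := p.le_radius_of_bound M (r := ε.toNNReal)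
      (fun n => by rw [Real.coe_toNNReal _ hε.le]; exact pnorm n)
    simpa [ENNReal.ofReal] using hb
  · intro y hy
    have hy' : ‖y‖ < ε := by
      rw [EMetric.mem_ball, edist_zero_right, ← ofReal_norm] at hy
      exact (ENNReal.ofReal_lt_ofReal_iff hε).mp hy
    set F : ℕ → (Fin d → ℝ) → ℝ := fun n u => K u * ((ell d u y) ^ n / n.factorial) with hF
    have habsF : ∀ n u, |F n u| = |K u| * (|ell d u y| ^ n / n.factorial) := by
      intro n u
      rw [hF, abs_mul, abs_div, abs_pow, Nat.abs_cast]
    have hellb : ∀ u, |ell d u y| ≤ ε * NN d u := by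
      intro u
      calc |ell d u y| ≤ NN d u * ‖y‖ := abs_ell_app_le u y
        _ ≤ NN d u * ε := mul_le_mul_of_nonneg_left hy'.le (NN_nonneg u)
        _ = ε * NN d u := mul_comm _ _
    have hFint : ∀ n, Integrable (F n) := by
      intro n
      apply Integrable.mono' ((Gn_int n).const_mul (ε ^ n / n.factorial))
      · exact (hKmeas.mul (((measurable_ell_app y).pow_const n).div_const _)).aestronglyMeasurable
      · filter_upwards with u
        rw [Real.norm_eq_abs, habsF]
        calc |K u| * (|ell d u y| ^ n / n.factorial)
            ≤ |K u| * ((ε * NN d u) ^ n / n.factorial) := by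
              gcongr
              exact hellb u
          _ = ε ^ n / n.factorial * (|K u| * NN d u ^ n) := by rw [mul_pow]; ring
    have hFsum : Summable fun n => ∫ u, ‖F n u‖ := by
      apply summable_of_sum_range_le (c := M)
        (fun n => integral_nonneg fun u => norm_nonneg _)
      intro c
      rw [← integral_finset_sum _ (fun n _ => (hFint n).norm)]
      apply integral_mono (integrable_finset_sum _ fun n _ => (hFint n).norm) hKexp
      intro u
      simp only [Real.norm_eq_abs]
      calc ∑ n ∈ Finset.range c, |F n u|
          = |K u| * ∑ n ∈ Finset.range c, |ell d u y| ^ n / n.factorial := by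
            rw [Finset.mul_sum]
            exact Finset.sum_congr rfl fun n _ => habsF n u
        _ ≤ |K u| * ∑ n ∈ Finset.range c, (ε * NN d u) ^ n / n.factorial := by
            gcongr with n hn
            exact hellb u
        _ ≤ |K u| * Real.exp (ε * NN d u) :=
            mul_le_mul_of_nonneg_left
              (Real.sum_le_exp_of_nonneg (mul_nonneg hε.le (NN_nonneg u)) c) (abs_nonneg _)
    have hs := hasSum_integral_of_summable_integral_norm (μ := volume) hFint hFsum
    have e1 : (fun n => ∫ u, F n u) = fun n => (p n) fun _ => y :=
      funext fun n => (papply n y).symm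
    have e2 : (∫ u, ∑' n, F n u) = ∫ u, h u * Real.exp (ell d u (θ₀ + y)) := by
      apply integral_congr_ae
      apply Filter.Eventually.of_forall
      intro u
      show (∑' n, F n u) = h u * Real.exp (ell d u (θ₀ + y))
      have h3 : ∑' n, F n u = K u * ∑' n, (ell d u y) ^ n / n.factorial := by
        simp only [hF]
        exact tsum_mul_left
      rw [h3, ← exp_eq_tsum, hK, (ell d u).map_add θ₀ y, Real.exp_add]
      ring
    rw [e1, e2] at hs
    exact hs

lemma analyticAt_rpow_const {b x : ℝ} (hx : 0 < x) :
    AnalyticAt ℝ (fun t : ℝ => t ^ b) x := by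
  have hc : AnalyticAt ℂ (fun z : ℂ => z ^ (b:ℂ)) (x:ℂ) :=
    analyticAt_id.cpow analyticAt_const (by simp [Complex.mem_slitPlane_iff, hx])
  have h2 : AnalyticAt ℝ (fun t : ℝ => ((t:ℂ) ^ (b:ℂ))) x :=
    hc.restrictScalars.comp (Complex.ofRealCLM.analyticAt x)
  have h3 : AnalyticAt ℝ (fun t : ℝ => ((t:ℂ) ^ (b:ℂ)).re) x :=
    (Complex.reCLM.analyticAt _).comp h2
  apply h3.congr
  filter_upwards [eventually_gt_nhds hx] with t ht
  rw [← Complex.ofReal_cpow ht.le b, Complex.ofReal_re]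

lemma integrable_exp_quad {b : ℝ} (hb : 0 < b) (c : ℝ) :
    Integrable (fun x : ℝ => Real.exp (-b * x ^ 2 + c * |x|)) := by
  apply Integrable.mono' ((integrable_exp_neg_mul_sq (half_pos hb)).const_mul
    (Real.exp (c ^ 2 / (2 * b))))
  · apply Continuous.aestronglyMeasurable
    fun_prop
  · filter_upwards with x
    rw [Real.norm_eq_abs, abs_of_pos (Real.exp_pos _), ← Real.exp_add]
    apply Real.exp_le_exp.mpr
    have h3 : (0:ℝ) < 2 * b := by linarith
    have key : c * |x| - (b/2) * x^2 ≤ c^2 / (2*b) := by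
      rw [le_div_iff₀ h3]
      have e1 : (c * |x| - b / 2 * x ^ 2) * (2 * b)
          = c^2 - (b * |x| - c)^2 + b^2 * (|x|^2 - x^2) := by ring
      rw [e1, sq_abs]
      have e2 := sq_nonneg (b * |x| - c)
      linarith
    linarith

end Stmt5Aux

open Stmt5Aux in
/-- The Gaussian convolution
`v(t,x) = (2π(T−t))^{−d/2} ∫ h(u) exp(−|u−x|²/(2(T−t))) du` of a measurable payoff `h` of
polynomial growth is real analytic, jointly in `(t,x)`, on `(0,T) × ℝ^d`. -/
theorem stmt_5 (d : ℕ) (hd : 1 ≤ d) (T : ℝ) (hT : 0 < T)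
    (h : (Fin d → ℝ) → ℝ) (hmeas : Measurable h)
    (a : ℝ) (ha : 0 ≤ a) (m : ℕ)
    (hgrowth : ∀ u, |h u| ≤ a * (1 + Real.sqrt (∑ j, u j ^ 2)) ^ m)
    (v : ℝ × (Fin d → ℝ) → ℝ)
    (hv : ∀ t ∈ Ioo 0 T, ∀ x : Fin d → ℝ,
      v (t, x) = (2 * π * (T - t)) ^ (-(d : ℝ) / 2) *
        ∫ u : Fin d → ℝ, h u * Real.exp (-(∑ j, (u j - x j) ^ 2) / (2 * (T - t)))) :
    AnalyticOnNhd ℝ v (Ioo 0 T ×ˢ (univ : Set (Fin d → ℝ))) := by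
  rintro ⟨t₀, x₀⟩ ⟨ht₀, -⟩
  have hs₀ : 0 < T - t₀ := sub_pos.mpr ht₀.2
  set r₀ : ℝ := (T - t₀)⁻¹ with hr₀
  have hr₀pos : 0 < r₀ := inv_pos.mpr hs₀
  set w₀ : Fin d → ℝ := fun j => x₀ j * (T - t₀)⁻¹ with hw₀
  -- integrability hypothesis for the Laplace transform lemma
  have hWint : Integrable (fun u => |h u| * Real.exp (ell d u (r₀, w₀)
      + (r₀ / 2) * NN d u)) := by
    set c : Fin d → ℝ := fun j => |w₀ j| + r₀ / 2 + m with hc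
    have hG : Integrable (fun u : Fin d → ℝ =>
        a * ∏ j, Real.exp (-(r₀/4) * u j ^ 2 + c j * |u j|)) :=
      (Integrable.fintype_prod fun j =>
        integrable_exp_quad (by positivity) (c j)).const_mul a
    apply hG.mono'
    · exact (hmeas.abs.mul ((measurable_ell_app (r₀, w₀)).add
        (measurable_NN.const_mul _)).exp).aestronglyMeasurable
    · filter_upwards with u
      rw [Real.norm_eq_abs, abs_of_nonneg (mul_nonneg (abs_nonneg _) (Real.exp_pos _).le)]
      have hS : (0:ℝ) ≤ ∑ j, u j ^ 2 := Finset.sum_nonneg fun j _ => sq_nonneg _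
      have hB : (0:ℝ) ≤ ∑ j, |u j| := Finset.sum_nonneg fun j _ => abs_nonneg _
      have hsqrt : Real.sqrt (∑ j, u j ^ 2) ≤ ∑ j, |u j| := by
        rw [show (∑ j, u j ^ 2) = ∑ j, |u j| ^ 2 by simp [sq_abs]]
        refine (Real.sqrt_le_sqrt
          (Finset.sum_sq_le_sq_sum_of_nonneg fun j _ => abs_nonneg _)).trans ?_
        rw [Real.sqrt_sq hB]
      have hgrow2 : |h u| ≤ a * Real.exp (m * ∑ j, |u j|) := by
        refine (hgrowth u).trans (mul_le_mul_of_nonneg_left ?_ ha)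
        calc (1 + Real.sqrt (∑ j, u j ^ 2)) ^ m
            ≤ Real.exp (∑ j, |u j|) ^ m := by
              apply pow_le_pow_left₀ (by positivity)
              calc 1 + Real.sqrt (∑ j, u j ^ 2)
                  ≤ Real.exp (Real.sqrt (∑ j, u j ^ 2)) := by
                    have := Real.add_one_le_exp (Real.sqrt (∑ j, u j ^ 2))
                    linarith
                _ ≤ Real.exp (∑ j, |u j|) := Real.exp_le_exp.mpr hsqrt
          _ = Real.exp (m * ∑ j, |u j|) := by rw [← Real.exp_nat_mul]
      have hexp : (m : ℝ) * (∑ j, |u j|) + (ell d u (r₀, w₀) + (r₀/2) * NN d u)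
          ≤ ∑ j, (-(r₀/4) * u j ^ 2 + c j * |u j|) := by
        rw [ell_apply, NN]
        have hsplit : ∑ j, (-(r₀/4) * u j ^ 2 + c j * |u j|)
            = -(r₀/4) * (∑ j, u j ^ 2) + ((∑ j, |u j| * |w₀ j|)
              + ((r₀/2) * (∑ j, |u j|) + (m : ℝ) * (∑ j, |u j|))) := by
          have e : ∀ j, -(r₀/4) * u j ^ 2 + c j * |u j|
              = -(r₀/4) * u j ^ 2 + (|u j| * |w₀ j|
                + ((r₀/2) * |u j| + (m : ℝ) * |u j|)) := by
            intro j; rw [hc]; ring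
          rw [Finset.sum_congr rfl fun j _ => e j]
          rw [Finset.sum_add_distrib, Finset.sum_add_distrib, Finset.sum_add_distrib,
            ← Finset.mul_sum, ← Finset.mul_sum, ← Finset.mul_sum]
        rw [hsplit]
        have hdot : ∑ j, u j * (r₀, w₀).2 j ≤ ∑ j, |u j| * |w₀ j| := by
          apply Finset.sum_le_sum
          intro j _
          calc u j * (r₀, w₀).2 j ≤ |u j * w₀ j| := le_abs_self _
            _ = |u j| * |w₀ j| := abs_mul _ _
        have hfst : ((r₀, w₀) : ℝ × (Fin d → ℝ)).1 = r₀ := rfl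
        rw [hfst]
        nlinarith [hS, hr₀pos, hdot, hB]
      calc |h u| * Real.exp (ell d u (r₀, w₀) + (r₀/2) * NN d u)
          ≤ (a * Real.exp (m * ∑ j, |u j|)) *
              Real.exp (ell d u (r₀, w₀) + (r₀/2) * NN d u) :=
            mul_le_mul_of_nonneg_right hgrow2 (Real.exp_pos _).le
        _ = a * Real.exp ((m : ℝ) * (∑ j, |u j|)
              + (ell d u (r₀, w₀) + (r₀/2) * NN d u)) := by
            rw [mul_assoc, ← Real.exp_add]
        _ ≤ a * Real.exp (∑ j, (-(r₀/4) * u j ^ 2 + c j * |u j|)) := by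
            gcongr
        _ = a * ∏ j, Real.exp (-(r₀/4) * u j ^ 2 + c j * |u j|) := by
            rw [Real.exp_sum]
  set Ψ : ℝ × (Fin d → ℝ) → ℝ := fun θ => ∫ u, h u * Real.exp (ell d u θ) with hΨdef
  have hΨ : AnalyticAt ℝ Ψ (r₀, w₀) :=
    analyticAt_laplace hmeas (r₀, w₀) (half_pos hr₀pos) hWint
  have hsub : AnalyticAt ℝ (fun q : ℝ × (Fin d → ℝ) => T - q.1) (t₀, x₀) :=
    analyticAt_const.sub analyticAt_fst
  have hinv : AnalyticAt ℝ (fun q : ℝ × (Fin d → ℝ) => (T - q.1)⁻¹) (t₀, x₀) :=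
    hsub.inv hs₀.ne'
  have hproj : ∀ j, AnalyticAt ℝ (fun q : ℝ × (Fin d → ℝ) => q.2 j) (t₀, x₀) := fun j =>
    ((ContinuousLinearMap.proj (R := ℝ) (φ := fun _ : Fin d => ℝ) j).analyticAt _).comp
      analyticAt_snd
  have hφ : AnalyticAt ℝ (fun q : ℝ × (Fin d → ℝ) =>
      (((T - q.1)⁻¹, fun j => q.2 j * (T - q.1)⁻¹) : ℝ × (Fin d → ℝ))) (t₀, x₀) :=
    hinv.prod (AnalyticAt.pi fun j => (hproj j).mul hinv)
  have hcomp : AnalyticAt ℝ (fun q : ℝ × (Fin d → ℝ) =>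
      Ψ ((T - q.1)⁻¹, fun j => q.2 j * (T - q.1)⁻¹)) (t₀, x₀) := by
    have h0 : AnalyticAt ℝ (Ψ ∘ fun q : ℝ × (Fin d → ℝ) =>
        (((T - q.1)⁻¹, fun j => q.2 j * (T - q.1)⁻¹) : ℝ × (Fin d → ℝ))) (t₀, x₀) :=
      AnalyticAt.comp (by exact hΨ) hφ
    exact h0
  have hpre : AnalyticAt ℝ (fun q : ℝ × (Fin d → ℝ) =>
      (2 * π * (T - q.1)) ^ (-(d:ℝ)/2)) (t₀, x₀) := by
    have hbase : AnalyticAt ℝ (fun q : ℝ × (Fin d → ℝ) => 2 * π * (T - q.1)) (t₀, x₀) :=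
      analyticAt_const.mul hsub
    have h0 : AnalyticAt ℝ ((fun s : ℝ => s ^ (-(d:ℝ)/2)) ∘
        fun q : ℝ × (Fin d → ℝ) => 2 * π * (T - q.1)) (t₀, x₀) :=
      AnalyticAt.comp (by exact analyticAt_rpow_const (by have := Real.pi_pos; positivity :
        (0:ℝ) < 2 * π * (T - t₀))) hbase
    exact h0
  have hgauss : AnalyticAt ℝ (fun q : ℝ × (Fin d → ℝ) =>
      Real.exp (-(∑ j, q.2 j ^ 2) / (2 * (T - q.1)))) (t₀, x₀) := by
    apply AnalyticAt.comp analyticAt_rexp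
    apply AnalyticAt.div
    · exact (Finset.analyticAt_fun_sum Finset.univ fun j _ => (hproj j).pow 2).neg
    · exact analyticAt_const.mul hsub
    · exact mul_ne_zero two_ne_zero hs₀.ne'
  have hg : AnalyticAt ℝ (fun q : ℝ × (Fin d → ℝ) =>
      (2 * π * (T - q.1)) ^ (-(d:ℝ)/2) *
        (Real.exp (-(∑ j, q.2 j ^ 2) / (2 * (T - q.1))) *
          Ψ ((T - q.1)⁻¹, fun j => q.2 j * (T - q.1)⁻¹))) (t₀, x₀) :=
    hpre.mul (hgauss.mul hcomp)
  apply hg.congr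
  have hopen : IsOpen (Ioo (0:ℝ) T ×ˢ (univ : Set (Fin d → ℝ))) := isOpen_Ioo.prod isOpen_univ
  filter_upwards [hopen.mem_nhds (show ((t₀, x₀) : ℝ × (Fin d → ℝ)) ∈ _ from
    ⟨ht₀, mem_univ _⟩)] with q hq2
  obtain ⟨t, x⟩ := q
  obtain ⟨hq1, -⟩ := hq2
  have hs : (0:ℝ) < T - t := sub_pos.mpr hq1.2
  rw [hv t hq1 x]
  congr 1
  show Real.exp (-(∑ j, x j ^ 2) / (2 * (T - t))) *
      ∫ u, h u * Real.exp (ell d u ((T - t)⁻¹, fun j => x j * (T - t)⁻¹))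
      = ∫ u, h u * Real.exp (-(∑ j, (u j - x j) ^ 2) / (2 * (T - t)))
  rw [← integral_const_mul]
  apply integral_congr_ae
  apply Filter.Eventually.of_forall
  intro u
  show Real.exp (-(∑ j, x j ^ 2) / (2 * (T - t))) *
      (h u * Real.exp (ell d u ((T - t)⁻¹, fun j => x j * (T - t)⁻¹)))
      = h u * Real.exp (-(∑ j, (u j - x j) ^ 2) / (2 * (T - t)))
  rw [ell_apply, mul_left_comm, ← Real.exp_add]
  congr 2
  show -(∑ j, x j ^ 2) / (2 * (T - t)) + ((-(∑ j, u j ^ 2) / 2) * (T - t)⁻¹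
      + ∑ j, u j * (x j * (T - t)⁻¹))
      = -(∑ j, (u j - x j) ^ 2) / (2 * (T - t))
  have hexpand : ∑ j, (u j - x j) ^ 2
      = (∑ j, u j ^ 2) - 2 * (∑ j, u j * x j) + ∑ j, x j ^ 2 := by
    rw [Finset.sum_congr rfl fun j _ =>
        (by ring : (u j - x j) ^ 2 = u j ^ 2 - 2 * (u j * x j) + x j ^ 2),
      Finset.sum_add_distrib, Finset.sum_sub_distrib, ← Finset.mul_sum]
  have hdot2 : ∑ j, u j * (x j * (T - t)⁻¹) = (∑ j, u j * x j) * (T - t)⁻¹ := by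
    simp only [← mul_assoc]
    rw [← Finset.sum_mul]
  rw [hdot2, hexpand]
  field_simp
  ring
end

section
/- There exist constants C > 0 and δ > 0 such that for every s > 0, every τ ∈ ℝ with |τ| < s, every y ∈ ℝ^d with |y| < √s, and every z ∈ ℝ^d, one has |exp( − Σ_{j=1}^d (z_j − i y_j)² / (2(s+iτ)) )| ≤ C exp( − δ |z|² / (2s) ). -/
open Real

private lemma stmt7_sum_eq (d : ℕ) (z y : Fin d → ℝ) :
    ∑ j, ((z j : ℂ) - Complex.I * (y j : ℂ)) ^ 2 =
      (((∑ j, z j ^ 2) - (∑ j, y j ^ 2) : ℝ) : ℂ)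
        + ((-2 * ∑ j, z j * y j : ℝ) : ℂ) * Complex.I := by
  push_cast
  rw [Finset.sum_congr rfl (fun j _ => show ((z j : ℂ) - Complex.I * (y j : ℂ)) ^ 2
    = ((z j:ℂ)^2 - (y j:ℂ)^2) + (-2 * ((z j:ℂ) * (y j:ℂ))) * Complex.I from by
      linear_combination ((y j : ℂ)^2) * Complex.I_sq)]
  rw [Finset.sum_add_distrib, Finset.sum_sub_distrib, ← Finset.sum_mul]
  rw [mul_comm (-2 : ℂ) (∑ x : Fin d, (z x:ℂ) * (y x:ℂ))]
  rw [← Finset.mul_sum]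
  ring

private lemma stmt7_re (s τ A B : ℝ) :
    ((-(((A:ℝ):ℂ) + ((B:ℝ):ℂ) * Complex.I)) / (2 * ((s:ℂ) + Complex.I * (τ:ℂ)))).re
      = ((-A) * (2*s) + (-B) * (2*τ)) / (4*(s^2 + τ^2)) := by
  rw [Complex.div_re]
  simp [Complex.normSq_apply]
  ring

private lemma stmt7_key (s τ Q R t w : ℝ) (hw : 0 < w) (hs : s = w^2) (ht : 0 ≤ t)
    (hτ : |τ| < s) (hQ0 : 0 ≤ Q) (hQ : Q < s) (hRτ : R * τ ≤ t * w * s) :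
    ((Q - t^2) * (2*s) + (2*R) * (2*τ)) * (8*s) ≤ (20*s - t^2) * (4*(s^2 + τ^2)) := by
  have h1 : τ^2 ≤ s^2 := by nlinarith [abs_nonneg τ, sq_abs τ, neg_abs_le τ, le_abs_self τ]
  subst hs
  nlinarith [sq_nonneg (t - 4*w), sq_nonneg (t - 2*w), sq_nonneg τ, sq_nonneg w,
    mul_nonneg (mul_nonneg (sq_nonneg w) (sq_nonneg w)) (sq_nonneg (t - 4*w)),
    mul_nonneg (mul_nonneg (sq_nonneg w) (sq_nonneg w)) (sq_nonneg (t - 2*w)),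
    mul_nonneg (sq_nonneg τ) (sq_nonneg (t-2*w)),
    mul_nonneg (sub_nonneg.2 h1) (sq_nonneg (t - 2*w)),
    mul_nonneg (sub_nonneg.2 h1) (mul_nonneg ht hw.le),
    mul_nonneg (sub_nonneg.2 hQ.le) (sq_nonneg w), sq_nonneg (τ - w^2), sq_nonneg (τ + w^2)]

/-- The kernel estimate (4.4) of the paper: there are universal constants
`C, δ > 0` such that for all `s > 0`, `|τ| < s`, `|y| < √s` (Euclidean norm on `ℝ^d`) and
all `z ∈ ℝ^d`, `|exp(−Σ_j (z_j − i y_j)²/(2(s+iτ)))| ≤ C exp(−δ|z|²/(2s))`. -/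
theorem stmt_7 (d : ℕ) (hd : 1 ≤ d) :
    ∃ C > (0 : ℝ), ∃ δ > (0 : ℝ), ∀ s : ℝ, 0 < s → ∀ τ : ℝ, |τ| < s →
      ∀ y : Fin d → ℝ, Real.sqrt (∑ j, y j ^ 2) < Real.sqrt s →
      ∀ z : Fin d → ℝ,
        ‖Complex.exp
            (-(∑ j, ((z j : ℂ) - Complex.I * (y j : ℂ)) ^ 2) /
              (2 * ((s : ℂ) + Complex.I * (τ : ℂ))))‖ ≤
          C * Real.exp (-δ * (∑ j, z j ^ 2) / (2 * s)) := by
  refine ⟨Real.exp (5/2), Real.exp_pos _, 1/4, by norm_num, ?_⟩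
  intro s hs τ hτ y hy z
  set P := ∑ j, z j ^ 2 with hPdef
  set Q := ∑ j, y j ^ 2 with hQdef
  set R := ∑ j, z j * y j with hRdef
  have hP0 : 0 ≤ P := Finset.sum_nonneg fun j _ => sq_nonneg _
  have hQ0 : 0 ≤ Q := Finset.sum_nonneg fun j _ => sq_nonneg _
  have hQs : Q < s := (Real.sqrt_lt_sqrt_iff hQ0).1 hy
  set t := Real.sqrt P with htdef
  set w := Real.sqrt s with hwdef
  have ht2 : t^2 = P := Real.sq_sqrt hP0
  have hw2 : w^2 = s := Real.sq_sqrt hs.le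
  have hw : 0 < w := Real.sqrt_pos.2 hs
  have ht : 0 ≤ t := Real.sqrt_nonneg _
  have hRabs : |R| ≤ t * w := by
    have hcs : R^2 ≤ P * Q := Finset.sum_mul_sq_le_sq_mul_sq Finset.univ z y
    have h1 : R^2 ≤ (t*w)^2 := by nlinarith
    calc |R| = Real.sqrt (R^2) := (Real.sqrt_sq_eq_abs R).symm
      _ ≤ Real.sqrt ((t*w)^2) := Real.sqrt_le_sqrt h1
      _ = t*w := Real.sqrt_sq (by positivity)
  have hRτ : R * τ ≤ t * w * s := by
    calc R * τ ≤ |R * τ| := le_abs_self _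
      _ = |R| * |τ| := abs_mul _ _
      _ ≤ (t*w) * s := mul_le_mul hRabs hτ.le (abs_nonneg τ) (by positivity)
  rw [stmt7_sum_eq, Complex.norm_exp, stmt7_re]
  have key := stmt7_key s τ Q R t w hw hw2.symm ht hτ hQ0 hQs hRτ
  have hfin : (-(P - Q) * (2*s) + (-(-2*R)) * (2*τ)) / (4*(s^2+τ^2))
      ≤ 5/2 + (-(1/4) * P / (2*s)) := by
    rw [← ht2]
    have heq : 5/2 + (-(1/4) * t^2 / (2*s)) = (20*s - t^2)/(8*s) := by
      field_simp; ring
    rw [heq, div_le_div_iff₀ (by positivity) (by positivity)]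
    nlinarith [key]
  calc Real.exp ((-(P - Q) * (2*s) + (-(-2*R)) * (2*τ)) / (4*(s^2+τ^2)))
      ≤ Real.exp (5/2 + (-(1/4) * P / (2*s))) := Real.exp_le_exp.2 hfin
    _ = Real.exp (5/2) * Real.exp (-(1/4) * P / (2*s)) := Real.exp_add _ _
    _ = Real.exp (5/2) * Real.exp (-(1/4) * P / (2*s)) := rfl
end

section
/- Let d ≥ 2, T > 0, let Σ be a symmetric positive definite d×d real matrix, and let h₁,…,h_d : ℝ → ℝ be Lebesgue measurable with polynomial growth, i.e. |h_i(r)| ≤ a(1+|r|)^m for all r ∈ ℝ and some constants a ≥ 0, m ∈ ℕ. For (t,x) ∈ (0,T)×ℝ^d define v_i(t,x) = ∫_{ℝ^d} h_i(u₁) φ_{(T−t)Σ}(u−x) du. Then each v_i is differentiable in x, and the matrix G(t,x) = (∂v_i/∂x_j(t,x))_{1≤i,j≤d} satisfies det G(t,x) = 0 for every (t,x) ∈ (0,T)×ℝ^d. -/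
open MeasureTheory Set Real Matrix

set_option maxHeartbeats 1000000
section Aux

private lemma aux_int_1d (k : ℕ) {b : ℝ} (hb : 0 < b) :
    Integrable (fun r : ℝ => (1 + |r|) ^ k * Real.exp (-b * r ^ 2)) := by
  have hmono : ∀ j : ℕ, Integrable (fun r : ℝ => |r| ^ j * Real.exp (-b * r ^ 2)) := by
    intro j
    have h1 := (integrable_rpow_mul_exp_neg_mul_sq hb (s := (j : ℝ))
      (by exact lt_of_lt_of_le (by norm_num) (Nat.cast_nonneg j))).abs
    refine h1.congr ?_
    filter_upwards with r
    rw [abs_mul, Real.rpow_natCast, abs_pow, abs_of_nonneg (Real.exp_nonneg _)]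
  have heq : (fun r : ℝ => (1 + |r|) ^ k * Real.exp (-b * r ^ 2))
      = fun r => ∑ j ∈ Finset.range (k + 1),
          (k.choose j : ℝ) * (|r| ^ j * Real.exp (-b * r ^ 2)) := by
    funext r
    rw [add_comm (1 : ℝ), add_pow, Finset.sum_mul]
    refine Finset.sum_congr rfl fun j _ => ?_
    simp only [one_pow, mul_one]
    ring
  rw [heq]
  exact integrable_finset_sum _ fun j _ => (hmono j).const_mul _

private lemma aux_int_pi {d : ℕ} (hd : 0 < d) (k : ℕ) {b : ℝ} (hb : 0 < b) :
    Integrable (fun u : Fin d → ℝ => (1 + ‖u‖) ^ k * Real.exp (-b * ‖u‖ ^ 2)) := by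
  haveI : Nonempty (Fin d) := ⟨⟨0, hd⟩⟩
  have hb' : 0 < b / d := by positivity
  have hprod : Integrable (fun u : Fin d → ℝ =>
      ∏ i, ((1 + |u i|) ^ k * Real.exp (-(b / d) * (u i) ^ 2))) :=
    Integrable.fintype_prod (f := fun _ r => (1 + |r|) ^ k * Real.exp (-(b / d) * r ^ 2))
      (fun _ => aux_int_1d k hb')
  refine hprod.mono' ?_ ?_
  · exact (((continuous_const.add continuous_norm).pow k).mul
      (Real.continuous_exp.comp (continuous_const.mul (continuous_norm.pow 2)))).aestronglyMeasurable
  · filter_upwards with u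
    have h0 : (0:ℝ) ≤ (1 + ‖u‖) ^ k * Real.exp (-b * ‖u‖ ^ 2) := by positivity
    rw [Real.norm_eq_abs, abs_of_nonneg h0]
    -- step 1 : (1+‖u‖)^k ≤ ∏ (1+|u i|)^k
    obtain ⟨i₀, -, hi₀⟩ := Finset.exists_mem_eq_sup (Finset.univ : Finset (Fin d))
      Finset.univ_nonempty (fun i => ‖u i‖₊)
    have hnorm : ‖u‖ = |u i₀| := by
      rw [Pi.norm_def, hi₀]; simp [Real.norm_eq_abs]
    have h1 : (1 + ‖u‖) ^ k ≤ ∏ i, (1 + |u i|) ^ k := by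
      rw [Finset.prod_pow]
      refine pow_le_pow_left₀ (by positivity) ?_ k
      rw [hnorm]
      have hrw : (1 + |u i₀|) = ∏ i, (if i = i₀ then 1 + |u i| else 1) := by simp
      rw [hrw]
      refine Finset.prod_le_prod (fun i _ => by positivity) (fun i _ => ?_)
      by_cases hi : i = i₀ <;> simp [hi, abs_nonneg]
    -- step 2 : exp(-b‖u‖²) ≤ ∏ exp(-(b/d) u i²)
    have h2 : Real.exp (-b * ‖u‖ ^ 2) ≤ ∏ i, Real.exp (-(b / d) * (u i) ^ 2) := by
      rw [← Real.exp_sum]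
      refine Real.exp_le_exp.mpr ?_
      have hsum : ∑ i, (u i) ^ 2 ≤ d * ‖u‖ ^ 2 := by
        have : ∀ i ∈ (Finset.univ : Finset (Fin d)), (u i) ^ 2 ≤ ‖u‖ ^ 2 := by
          intro i _
          have := norm_le_pi_norm u i
          rw [Real.norm_eq_abs] at this
          calc (u i) ^ 2 = |u i| ^ 2 := (sq_abs _).symm
            _ ≤ ‖u‖ ^ 2 := pow_le_pow_left₀ (abs_nonneg _) this 2
        calc ∑ i, (u i) ^ 2 ≤ ∑ _i : Fin d, ‖u‖ ^ 2 := Finset.sum_le_sum this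
          _ = d * ‖u‖ ^ 2 := by simp [mul_comm]
      have hd' : (0:ℝ) < d := by exact_mod_cast hd
      have : ∑ i, -(b / d) * (u i) ^ 2 = -(b / d) * ∑ i, (u i) ^ 2 := by
        rw [Finset.mul_sum]
      rw [this]
      rw [neg_mul, neg_mul, neg_le_neg_iff]
      calc b / d * ∑ i, (u i) ^ 2 ≤ b / d * (d * ‖u‖ ^ 2) := by
            exact mul_le_mul_of_nonneg_left hsum (le_of_lt hb')
        _ = b * ‖u‖ ^ 2 := by field_simp
    calc (1 + ‖u‖) ^ k * Real.exp (-b * ‖u‖ ^ 2)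
        ≤ (∏ i, (1 + |u i|) ^ k) * ∏ i, Real.exp (-(b / d) * (u i) ^ 2) := by
          exact mul_le_mul h1 h2 (Real.exp_nonneg _) (Finset.prod_nonneg fun i _ => by positivity)
      _ = ∏ i, ((1 + |u i|) ^ k * Real.exp (-(b / d) * (u i) ^ 2)) := by
          rw [Finset.prod_mul_distrib]

private lemma aux_cont_quad {d : ℕ} (M : Matrix (Fin d) (Fin d) ℝ) :
    Continuous fun z : Fin d → ℝ => z ⬝ᵥ (M *ᵥ z) := by
  simp only [dotProduct, Matrix.mulVec]
  exact continuous_finset_sum _ fun i _ => (continuous_apply i).mul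
    (continuous_finset_sum _ fun j _ => continuous_const.mul (continuous_apply j))

private lemma aux_cont_dot {d : ℕ} (w : Fin d → ℝ) :
    Continuous fun z : Fin d → ℝ => z ⬝ᵥ w := by
  simp only [dotProduct]
  exact continuous_finset_sum _ fun i _ => (continuous_apply i).mul continuous_const

private lemma aux_symm {d : ℕ} {M : Matrix (Fin d) (Fin d) ℝ} (hM : M.IsHermitian)
    (x y : Fin d → ℝ) : x ⬝ᵥ (M *ᵥ y) = y ⬝ᵥ (M *ᵥ x) := by
  simp only [dotProduct, Matrix.mulVec, Finset.mul_sum]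
  rw [Finset.sum_comm]
  refine Finset.sum_congr rfl fun i _ => Finset.sum_congr rfl fun j _ => ?_
  have hij : M j i = M i j := by
    have := congrFun (congrFun hM i) j
    simpa [Matrix.conjTranspose_apply] using this
  rw [hij]; ring

private lemma aux_coercive {d : ℕ} (hd : 0 < d) {M : Matrix (Fin d) (Fin d) ℝ}
    (hM : M.PosDef) :
    ∃ c > 0, ∀ z : Fin d → ℝ, c * ‖z‖ ^ 2 ≤ z ⬝ᵥ (M *ᵥ z) := by
  haveI : Nonempty (Fin d) := ⟨⟨0, hd⟩⟩
  have hpos : ∀ z : Fin d → ℝ, z ≠ 0 → 0 < z ⬝ᵥ (M *ᵥ z) := by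
    intro z hz
    have := hM.dotProduct_mulVec_pos hz
    simpa using this
  have hne : (Metric.sphere (0 : Fin d → ℝ) 1).Nonempty :=
    NormedSpace.sphere_nonempty.mpr zero_le_one
  obtain ⟨z₀, hz₀mem, hmin⟩ := (isCompact_sphere (0 : Fin d → ℝ) 1).exists_isMinOn hne
    (aux_cont_quad M).continuousOn
  have hz₀norm : ‖z₀‖ = 1 := by simpa using hz₀mem
  have hz₀ne : z₀ ≠ 0 := by
    intro h0; rw [h0] at hz₀norm; simp at hz₀norm
  refine ⟨z₀ ⬝ᵥ (M *ᵥ z₀), hpos z₀ hz₀ne, fun z => ?_⟩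
  rcases eq_or_ne z 0 with rfl | hz
  · simp
  have hzn : (0:ℝ) < ‖z‖ := norm_pos_iff.mpr hz
  have hmem : ‖z‖⁻¹ • z ∈ Metric.sphere (0 : Fin d → ℝ) 1 := by
    simp [norm_smul, abs_of_pos (inv_pos.mpr hzn), inv_mul_cancel₀ hzn.ne']
  have hle := hmin hmem
  have hscale : (‖z‖⁻¹ • z) ⬝ᵥ (M *ᵥ (‖z‖⁻¹ • z)) = (‖z‖⁻¹) ^ 2 * (z ⬝ᵥ (M *ᵥ z)) := by
    rw [Matrix.mulVec_smul, smul_dotProduct, dotProduct_smul]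
    simp [smul_eq_mul]; ring
  have : z₀ ⬝ᵥ (M *ᵥ z₀) ≤ (‖z‖⁻¹) ^ 2 * (z ⬝ᵥ (M *ᵥ z)) := by
    simpa [hscale] using hle
  have h2 : (‖z‖⁻¹) ^ 2 * (z ⬝ᵥ (M *ᵥ z)) = (z ⬝ᵥ (M *ᵥ z)) / ‖z‖ ^ 2 := by
    field_simp
  rw [h2] at this
  rw [← le_div_iff₀ (by positivity)] at *
  exact this

private lemma aux_key {d : ℕ} (hd : 0 < d)
    {M : Matrix (Fin d) (Fin d) ℝ} (hM : M.PosDef)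
    {s : ℝ} (hs : 0 < s) (C0 : ℝ)
    (h : ℝ → ℝ) (hme : Measurable h) {a : ℝ} (ha : 0 ≤ a) (m : ℕ)
    (hgrowth : ∀ r, |h r| ≤ a * (1 + |r|) ^ m)
    (i0 : Fin d) (σ₀ : ℝ) :
    ∃ D : ℝ, HasDerivAt (fun σ : ℝ => ∫ u : Fin d → ℝ,
      h (u i0) * (C0 * Real.exp (-((u - σ • (Pi.single i0 (1:ℝ) : Fin d → ℝ)) ⬝ᵥ
        (M *ᵥ (u - σ • (Pi.single i0 (1:ℝ) : Fin d → ℝ)))) / (2 * s)))) D σ₀ := by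
  haveI : Nonempty (Fin d) := ⟨⟨0, hd⟩⟩
  obtain ⟨c, hc, hcoer⟩ := aux_coercive hd hM
  set e0 : Fin d → ℝ := (Pi.single i0 (1:ℝ) : Fin d → ℝ) with he0_def
  have he0norm : ‖e0‖ = 1 := by rw [he0_def, Pi.norm_single, norm_one]
  set w : Fin d → ℝ := M *ᵥ e0 with hw_def
  set γ : ℝ := e0 ⬝ᵥ (M *ᵥ e0) with hγ_def
  have h2s : (0:ℝ) < 2 * s := by linarith
  -- the quadratic expansion
  have hquad : ∀ (u : Fin d → ℝ) (σ : ℝ),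
      (u - σ • e0) ⬝ᵥ (M *ᵥ (u - σ • e0))
        = u ⬝ᵥ (M *ᵥ u) - σ * (2 * (u ⬝ᵥ w)) + σ ^ 2 * γ := by
    intro u σ
    have h1 : e0 ⬝ᵥ (M *ᵥ u) = u ⬝ᵥ (M *ᵥ e0) := aux_symm hM.isHermitian e0 u
    simp only [Matrix.mulVec_sub, dotProduct_sub, sub_dotProduct,
      Matrix.mulVec_smul, dotProduct_smul, smul_dotProduct, smul_eq_mul,
      hw_def, hγ_def]
    rw [h1]; ring
  -- constants
  set R : ℝ := |σ₀| + 1 with hR_def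
  have hR0 : (0:ℝ) < R := by rw [hR_def]; positivity
  set Sw : ℝ := ∑ j, |w j| with hSw_def
  have hSw0 : (0:ℝ) ≤ Sw := Finset.sum_nonneg fun j _ => abs_nonneg _
  set K : ℝ := 2 * Sw + 2 * |γ| * R + 1 with hK_def
  have hK0 : (0:ℝ) < K := by rw [hK_def]; positivity
  set b : ℝ := c / (4 * s) with hb_def
  have hb : (0:ℝ) < b := by rw [hb_def]; positivity
  set A : ℝ := |C0| * Real.exp (c * R ^ 2 / (2 * s)) with hA_def
  have hA0 : (0:ℝ) ≤ A := by rw [hA_def]; positivity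
  clear_value e0 w γ R Sw K b A
  -- continuity / measurability helpers
  have hcontφ : ∀ σ : ℝ, Continuous fun u : Fin d → ℝ =>
      C0 * Real.exp (-((u - σ • e0) ⬝ᵥ (M *ᵥ (u - σ • e0))) / (2 * s)) := fun σ =>
    continuous_const.mul (Real.continuous_exp.comp
      ((((aux_cont_quad M).comp (continuous_id.sub continuous_const)).neg).div_const _))
  have hhm : Measurable fun u : Fin d → ℝ => h (u i0) :=
    hme.comp (measurable_pi_apply i0)
  have hF_meas : ∀ σ : ℝ, AEStronglyMeasurable
      (fun u : Fin d → ℝ => h (u i0) * (C0 * Real.exp (-((u - σ • e0) ⬝ᵥ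
        (M *ᵥ (u - σ • e0))) / (2 * s)))) volume :=
    fun σ => hhm.aestronglyMeasurable.mul (hcontφ σ).aestronglyMeasurable
  -- the exponential estimate
  have hexp : ∀ (u : Fin d → ℝ) (σ : ℝ), |σ| ≤ R →
      Real.exp (-((u - σ • e0) ⬝ᵥ (M *ᵥ (u - σ • e0))) / (2 * s))
        ≤ Real.exp (c * R ^ 2 / (2 * s)) * Real.exp (-b * ‖u‖ ^ 2) := by
    intro u σ hσ
    rw [← Real.exp_add]
    refine Real.exp_le_exp.mpr ?_
    have h1 := hcoer (u - σ • e0)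
    have h2 : ‖u‖ ≤ ‖u - σ • e0‖ + R := by
      calc ‖u‖ = ‖(u - σ • e0) + σ • e0‖ := by rw [sub_add_cancel]
        _ ≤ ‖u - σ • e0‖ + ‖σ • e0‖ := norm_add_le _ _
        _ = ‖u - σ • e0‖ + |σ| := by rw [norm_smul, he0norm, Real.norm_eq_abs, mul_one]
        _ ≤ _ := by linarith
    have h3 : ‖u‖ ^ 2 ≤ 2 * ‖u - σ • e0‖ ^ 2 + 2 * R ^ 2 := by
      nlinarith [norm_nonneg (u - σ • e0), norm_nonneg u, sq_nonneg (‖u - σ • e0‖ - R)]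
    have key : c * ‖u‖ ^ 2 / 2 - c * R ^ 2 ≤ (u - σ • e0) ⬝ᵥ (M *ᵥ (u - σ • e0)) := by
      have h4 : c * ‖u‖ ^ 2 ≤ c * (2 * ‖u - σ • e0‖ ^ 2 + 2 * R ^ 2) :=
        mul_le_mul_of_nonneg_left h3 hc.le
      nlinarith [h1, h4]
    calc -((u - σ • e0) ⬝ᵥ (M *ᵥ (u - σ • e0))) / (2 * s)
        ≤ -(c * ‖u‖ ^ 2 / 2 - c * R ^ 2) / (2 * s) := by
          exact div_le_div_of_nonneg_right (by linarith) h2s.le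
      _ = c * R ^ 2 / (2 * s) + -b * ‖u‖ ^ 2 := by
          rw [hb_def]; field_simp; ring
  -- dot product bound
  have hdotb : ∀ u : Fin d → ℝ, |u ⬝ᵥ w| ≤ Sw * ‖u‖ := by
    intro u
    rw [hSw_def]
    calc |u ⬝ᵥ w| ≤ ∑ j, |u j * w j| := Finset.abs_sum_le_sum_abs _ _
      _ ≤ ∑ j, ‖u‖ * |w j| := by
          refine Finset.sum_le_sum fun j _ => ?_
          rw [abs_mul]
          refine mul_le_mul_of_nonneg_right ?_ (abs_nonneg _)
          have := norm_le_pi_norm u j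
          rwa [Real.norm_eq_abs] at this
      _ = (∑ j, |w j|) * ‖u‖ := by rw [← Finset.mul_sum, mul_comm]
  -- growth bound
  have hgrow : ∀ u : Fin d → ℝ, |h (u i0)| ≤ a * (1 + ‖u‖) ^ m := by
    intro u
    refine (hgrowth _).trans (mul_le_mul_of_nonneg_left ?_ ha)
    refine pow_le_pow_left₀ (by positivity) ?_ m
    have := norm_le_pi_norm u i0
    rw [Real.norm_eq_abs] at this
    linarith
  -- the derivative candidate
  set F' : ℝ → (Fin d → ℝ) → ℝ := fun σ u =>
    h (u i0) * (C0 * Real.exp (-((u - σ • e0) ⬝ᵥ (M *ᵥ (u - σ • e0))) / (2 * s)))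
      * ((2 * (u ⬝ᵥ w) - 2 * γ * σ) / (2 * s)) with hF'_def
  -- bounds
  have hbd1 : Integrable (fun u : Fin d → ℝ =>
      (a * A) * ((1 + ‖u‖) ^ m * Real.exp (-b * ‖u‖ ^ 2))) :=
    ((aux_int_pi hd m hb).const_mul _)
  have hbd2 : Integrable (fun u : Fin d → ℝ =>
      (a * A * K / (2 * s)) * ((1 + ‖u‖) ^ (m + 1) * Real.exp (-b * ‖u‖ ^ 2))) :=
    ((aux_int_pi hd (m + 1) hb).const_mul _)
  -- pointwise bound on F
  have hFle : ∀ (u : Fin d → ℝ) (σ : ℝ), |σ| ≤ R →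
      ‖h (u i0) * (C0 * Real.exp (-((u - σ • e0) ⬝ᵥ (M *ᵥ (u - σ • e0))) / (2 * s)))‖
        ≤ (a * A) * ((1 + ‖u‖) ^ m * Real.exp (-b * ‖u‖ ^ 2)) := by
    intro u σ hσ
    rw [Real.norm_eq_abs, abs_mul]
    have e2 : |C0 * Real.exp (-((u - σ • e0) ⬝ᵥ (M *ᵥ (u - σ • e0))) / (2 * s))|
        ≤ A * Real.exp (-b * ‖u‖ ^ 2) := by
      rw [abs_mul, abs_of_nonneg (Real.exp_nonneg _)]
      calc |C0| * Real.exp (-((u - σ • e0) ⬝ᵥ (M *ᵥ (u - σ • e0))) / (2 * s))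
          ≤ |C0| * (Real.exp (c * R ^ 2 / (2 * s)) * Real.exp (-b * ‖u‖ ^ 2)) :=
            mul_le_mul_of_nonneg_left (hexp u σ hσ) (abs_nonneg _)
        _ = A * Real.exp (-b * ‖u‖ ^ 2) := by rw [hA_def]; ring
    calc |h (u i0)| * |C0 * Real.exp (-((u - σ • e0) ⬝ᵥ (M *ᵥ (u - σ • e0))) / (2 * s))|
        ≤ (a * (1 + ‖u‖) ^ m) * (A * Real.exp (-b * ‖u‖ ^ 2)) :=
          mul_le_mul (hgrow u) e2 (abs_nonneg _) (by positivity)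
      _ = (a * A) * ((1 + ‖u‖) ^ m * Real.exp (-b * ‖u‖ ^ 2)) := by ring
  -- integrability of F σ₀
  have hF_int : Integrable (fun u : Fin d → ℝ =>
      h (u i0) * (C0 * Real.exp (-((u - σ₀ • e0) ⬝ᵥ (M *ᵥ (u - σ₀ • e0))) / (2 * s)))) := by
    refine hbd1.mono' (hF_meas σ₀) ?_
    filter_upwards with u
    exact hFle u σ₀ (by rw [hR_def]; linarith [abs_nonneg σ₀])
  -- measurability of F'
  have hF'_meas : AEStronglyMeasurable (F' σ₀) volume := by
    rw [hF'_def]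
    exact (hF_meas σ₀).mul
      (((continuous_const.mul (aux_cont_dot w)).sub continuous_const).div_const
        (2 * s)).aestronglyMeasurable
  -- bound on F'
  have h_bound : ∀ (u : Fin d → ℝ), ∀ σ ∈ Metric.ball σ₀ 1, ‖F' σ u‖
      ≤ (a * A * K / (2 * s)) * ((1 + ‖u‖) ^ (m + 1) * Real.exp (-b * ‖u‖ ^ 2)) := by
    intro u σ hσ
    have hσR : |σ| ≤ R := by
      rw [Metric.mem_ball, Real.dist_eq] at hσ
      rw [hR_def]
      have := abs_sub_abs_le_abs_sub σ σ₀
      linarith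
    rw [hF'_def]
    simp only []
    rw [Real.norm_eq_abs, abs_mul]
    have e3 : |(2 * (u ⬝ᵥ w) - 2 * γ * σ) / (2 * s)| ≤ K * (1 + ‖u‖) / (2 * s) := by
      rw [abs_div, abs_of_pos h2s]
      refine div_le_div_of_nonneg_right ?_ h2s.le
      have t1 : |2 * (u ⬝ᵥ w) - 2 * γ * σ| ≤ 2 * |u ⬝ᵥ w| + 2 * |γ| * |σ| := by
        calc |2 * (u ⬝ᵥ w) - 2 * γ * σ| ≤ |2 * (u ⬝ᵥ w)| + |2 * γ * σ| := abs_sub _ _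
          _ = 2 * |u ⬝ᵥ w| + 2 * |γ| * |σ| := by simp [abs_mul]; try ring
      have t2 : |u ⬝ᵥ w| ≤ Sw * ‖u‖ := hdotb u
      have t3 : |σ| ≤ R := hσR
      have t4 : 0 ≤ ‖u‖ := norm_nonneg u
      have t5 : 0 ≤ |γ| := abs_nonneg γ
      rw [hK_def]
      nlinarith [mul_le_mul_of_nonneg_left t3 (by positivity : (0:ℝ) ≤ 2 * |γ|),
        mul_nonneg (mul_nonneg t5 hR0.le) t4, mul_nonneg hSw0 t4, mul_nonneg t5 t4]
    calc |h (u i0) * (C0 * Real.exp (-((u - σ • e0) ⬝ᵥ (M *ᵥ (u - σ • e0))) / (2 * s)))|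
          * |(2 * (u ⬝ᵥ w) - 2 * γ * σ) / (2 * s)|
        ≤ ((a * A) * ((1 + ‖u‖) ^ m * Real.exp (-b * ‖u‖ ^ 2))) * (K * (1 + ‖u‖) / (2 * s)) := by
          refine mul_le_mul ?_ e3 (abs_nonneg _) (by positivity)
          simpa [Real.norm_eq_abs, abs_mul] using hFle u σ hσR
      _ = (a * A * K / (2 * s)) * ((1 + ‖u‖) ^ (m + 1) * Real.exp (-b * ‖u‖ ^ 2)) := by
          rw [pow_succ]; ring
  -- differentiability in σ
  have h_diff : ∀ (u : Fin d → ℝ), ∀ σ ∈ Metric.ball σ₀ 1,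
      HasDerivAt (fun σ : ℝ => h (u i0) * (C0 * Real.exp
        (-((u - σ • e0) ⬝ᵥ (M *ᵥ (u - σ • e0))) / (2 * s)))) (F' σ u) σ := by
    intro u σ _
    have heq : (fun σ : ℝ => h (u i0) * (C0 * Real.exp
        (-((u - σ • e0) ⬝ᵥ (M *ᵥ (u - σ • e0))) / (2 * s))))
        = fun σ : ℝ => (h (u i0) * C0) * Real.exp
          (-(u ⬝ᵥ (M *ᵥ u) - σ * (2 * (u ⬝ᵥ w)) + σ ^ 2 * γ) / (2 * s)) := by
      funext τ
      rw [hquad u τ]; ring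
    rw [heq]
    have hA' : HasDerivAt (fun τ : ℝ => u ⬝ᵥ (M *ᵥ u) - τ * (2 * (u ⬝ᵥ w)) + τ ^ 2 * γ)
        (-(2 * (u ⬝ᵥ w)) + 2 * σ * γ) σ := by
      have h1' : HasDerivAt (fun τ : ℝ => τ * (2 * (u ⬝ᵥ w))) (2 * (u ⬝ᵥ w)) σ := by
        simpa using (hasDerivAt_id σ).mul_const (2 * (u ⬝ᵥ w))
      have h2' : HasDerivAt (fun τ : ℝ => τ ^ 2 * γ) (2 * σ * γ) σ := by
        have := (hasDerivAt_pow 2 σ).mul_const γ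
        simpa [pow_one] using this
      exact (((hasDerivAt_const σ (u ⬝ᵥ (M *ᵥ u))).sub h1').add h2').congr_deriv (by ring)
    have hp : HasDerivAt (fun τ : ℝ =>
        -(u ⬝ᵥ (M *ᵥ u) - τ * (2 * (u ⬝ᵥ w)) + τ ^ 2 * γ) / (2 * s))
        ((2 * (u ⬝ᵥ w) - 2 * γ * σ) / (2 * s)) σ := by
      have := (hA'.neg).div_const (2 * s)
      exact this.congr_deriv (by ring)
    have hfull := (hp.exp).const_mul (h (u i0) * C0)
    refine hfull.congr_deriv ?_
    simp only [hF'_def]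
    rw [hquad u σ]
    ring
  -- conclusion
  obtain ⟨-, hD⟩ := hasDerivAt_integral_of_dominated_loc_of_deriv_le
    (F' := F') (bound := fun u : Fin d → ℝ =>
      (a * A * K / (2 * s)) * ((1 + ‖u‖) ^ (m + 1) * Real.exp (-b * ‖u‖ ^ 2)))
    (Metric.ball_mem_nhds σ₀ one_pos) (Filter.Eventually.of_forall fun σ => hF_meas σ) hF_int hF'_meas
    (Filter.Eventually.of_forall fun u => h_bound u) hbd2
    (Filter.Eventually.of_forall fun u => h_diff u)
  exact ⟨_, hD⟩

end Aux

/-- Counterexample of Section 4.1: with `d ≥ 2` correlated Gaussian factors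
(covariance `Σ`), if all payoffs `h_i` depend only on the first coordinate, the matrix
`G(t,x) = (∂v_i/∂x_j(t,x))` of the price functions
`v_i(t,x) = ∫ h_i(u₁) φ_{(T−t)Σ}(u−x) du` is everywhere singular. -/
theorem stmt_11 (d : ℕ) (hd : 2 ≤ d) (T : ℝ) (hT : 0 < T)
    (Cov : Matrix (Fin d) (Fin d) ℝ) (hCov : Cov.PosDef)
    (h : Fin d → ℝ → ℝ) (hmeas : ∀ i, Measurable (h i))
    (a : ℝ) (ha : 0 ≤ a) (m : ℕ)
    (hgrowth : ∀ i, ∀ r : ℝ, |h i r| ≤ a * (1 + |r|) ^ m)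
    (φ : ℝ → (Fin d → ℝ) → ℝ)
    (hφ : ∀ s : ℝ, 0 < s → ∀ z, φ s z = ((2 * π * s) ^ d * Cov.det) ^ (-(1 : ℝ) / 2) *
      Real.exp (-(z ⬝ᵥ (Cov⁻¹ *ᵥ z)) / (2 * s)))
    (v : Fin d → ℝ → (Fin d → ℝ) → ℝ)
    (hv : ∀ i, ∀ t ∈ Ioo 0 T, ∀ x : Fin d → ℝ,
      v i t x = ∫ u : Fin d → ℝ, h i (u ⟨0, by omega⟩) * φ (T - t) (u - x)) :
    ∀ t ∈ Ioo 0 T, ∀ x : Fin d → ℝ,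
      (∀ i, DifferentiableAt ℝ (v i t) x) ∧
      (Matrix.of fun i j => fderiv ℝ (v i t) x (Pi.single j 1)).det = 0 := by
  intro t ht x
  have hd0 : 0 < d := by omega
  haveI : Nonempty (Fin d) := ⟨⟨0, hd0⟩⟩
  have hs : 0 < T - t := by linarith [ht.2]
  have i0 : Fin d := ⟨0, hd0⟩
  -- abbreviations (no `set` to avoid syntactic mismatch)
  -- key derivative statement
  have hkey : ∀ i : Fin d, ∃ D : ℝ, HasDerivAt (fun σ : ℝ => ∫ u : Fin d → ℝ,
      h i (u (⟨0, hd0⟩ : Fin d)) * ((((2 * π * (T - t)) ^ d * Cov.det) ^ (-(1 : ℝ) / 2)) *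
        Real.exp (-((u - σ • (Pi.single (⟨0, hd0⟩ : Fin d) (1:ℝ) : Fin d → ℝ)) ⬝ᵥ
          (Cov⁻¹ *ᵥ (u - σ • (Pi.single (⟨0, hd0⟩ : Fin d) (1:ℝ) : Fin d → ℝ)))) /
          (2 * (T - t))))) D (x ⟨0, hd0⟩) :=
    fun i => aux_key hd0 hCov.inv hs _ (h i) (hmeas i) ha m (hgrowth i) _ _
  choose D hD using hkey
  -- v as a function of the first coordinate
  have hveq : ∀ (i : Fin d) (y : Fin d → ℝ), v i t y
      = ∫ u : Fin d → ℝ, h i (u (⟨0, hd0⟩ : Fin d)) *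
          ((((2 * π * (T - t)) ^ d * Cov.det) ^ (-(1 : ℝ) / 2)) *
            Real.exp (-((u - (y ⟨0, hd0⟩) • (Pi.single (⟨0, hd0⟩ : Fin d) (1:ℝ) : Fin d → ℝ)) ⬝ᵥ
              (Cov⁻¹ *ᵥ (u - (y ⟨0, hd0⟩) • (Pi.single (⟨0, hd0⟩ : Fin d) (1:ℝ) : Fin d → ℝ)))) /
              (2 * (T - t)))) := by
    intro i y
    rw [hv i t ht y]
    have htrans := MeasureTheory.integral_add_right_eq_self (μ := (volume : Measure (Fin d → ℝ)))
      (fun u : Fin d → ℝ => h i (u (⟨0, hd0⟩ : Fin d)) *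
        ((((2 * π * (T - t)) ^ d * Cov.det) ^ (-(1 : ℝ) / 2)) *
          Real.exp (-((u - (y ⟨0, hd0⟩) • (Pi.single (⟨0, hd0⟩ : Fin d) (1:ℝ) : Fin d → ℝ)) ⬝ᵥ
            (Cov⁻¹ *ᵥ (u - (y ⟨0, hd0⟩) • (Pi.single (⟨0, hd0⟩ : Fin d) (1:ℝ) : Fin d → ℝ)))) /
            (2 * (T - t)))))
      ((y ⟨0, hd0⟩) • (Pi.single (⟨0, hd0⟩ : Fin d) (1:ℝ) : Fin d → ℝ) - y)
    rw [← htrans]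
    congr 1
    funext u
    have harg : (u + ((y ⟨0, hd0⟩) • (Pi.single (⟨0, hd0⟩ : Fin d) (1:ℝ) : Fin d → ℝ) - y))
        (⟨0, hd0⟩ : Fin d) = u (⟨0, hd0⟩ : Fin d) := by
      simp [Pi.single_eq_same]
    have hvec : (u + ((y ⟨0, hd0⟩) • (Pi.single (⟨0, hd0⟩ : Fin d) (1:ℝ) : Fin d → ℝ) - y))
        - (y ⟨0, hd0⟩) • (Pi.single (⟨0, hd0⟩ : Fin d) (1:ℝ) : Fin d → ℝ) = u - y := by
      abel
    rw [harg, hvec, hφ (T - t) hs]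
  -- differentiability
  have hFD : ∀ i : Fin d, HasFDerivAt (v i t)
      ((D i) • (ContinuousLinearMap.proj (R := ℝ) (φ := fun _ : Fin d => ℝ) (⟨0, hd0⟩ : Fin d))) x := by
    intro i
    have hfe : v i t = (fun σ : ℝ => ∫ u : Fin d → ℝ,
        h i (u (⟨0, hd0⟩ : Fin d)) * ((((2 * π * (T - t)) ^ d * Cov.det) ^ (-(1 : ℝ) / 2)) *
          Real.exp (-((u - σ • (Pi.single (⟨0, hd0⟩ : Fin d) (1:ℝ) : Fin d → ℝ)) ⬝ᵥ
            (Cov⁻¹ *ᵥ (u - σ • (Pi.single (⟨0, hd0⟩ : Fin d) (1:ℝ) : Fin d → ℝ)))) /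
            (2 * (T - t))))) ∘ (fun y : Fin d → ℝ => y (⟨0, hd0⟩ : Fin d)) :=
      funext fun y => hveq i y
    rw [hfe]
    have hproj : HasFDerivAt (fun y : Fin d → ℝ => y (⟨0, hd0⟩ : Fin d))
        (ContinuousLinearMap.proj (R := ℝ) (φ := fun _ : Fin d => ℝ) (⟨0, hd0⟩ : Fin d)) x := by
      exact (ContinuousLinearMap.proj (R := ℝ) (φ := fun _ : Fin d => ℝ) (⟨0, hd0⟩ : Fin d)).hasFDerivAt
    exact (hD i).comp_hasFDerivAt x hproj
  refine ⟨fun i => (hFD i).differentiableAt, ?_⟩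
  apply Matrix.det_eq_zero_of_column_eq_zero (⟨1, by omega⟩ : Fin d)
  intro i
  simp only [Matrix.of_apply]
  rw [(hFD i).fderiv]
  rw [ContinuousLinearMap.smul_apply, ContinuousLinearMap.proj_apply]
  rw [Pi.single_eq_of_ne (by simp [Fin.ext_iff] : (⟨0, hd0⟩ : Fin d) ≠ ⟨1, by omega⟩)]
  simp
end
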